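/- arXiv:2303.05468 — 6 statements merged into one kernel-verified Lean document; each statement's English description precedes it below -/
import Mathlib

section
/- Let n ≥ 4. The subgroups of index two of the quasi-abelian group QA_n are exactly the three subgroups H_1 = ⟨x^2, y⟩, H_2 = ⟨x⟩ and H_3 = ⟨yx⟩; moreover H_1 ≅ C_{2^{n-2}} × C_2, and H_2 ≅ H_3 ≅ C_{2^{n-1}}. -/
/-- The relators of the quasi-abelian group `QA_n`:
`x^(2^(n-1)) = 1`, `y^2 = 1`, `y * x * y⁻¹ = x^(2^(n-2)+1)`.
The generator `x` is encoded by `true` and `y` by `false`. -/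
def qaRels (n : ℕ) : Set (FreeGroup Bool) :=
  {FreeGroup.of true ^ 2 ^ (n - 1),
   FreeGroup.of false ^ 2,
   FreeGroup.of false * FreeGroup.of true * (FreeGroup.of false)⁻¹ *
     (FreeGroup.of true ^ (2 ^ (n - 2) + 1))⁻¹}

/-- The quasi-abelian group `QA_n`, given by the presentation
`⟨x, y ∣ x^(2^(n-1)) = y^2 = 1, y x y⁻¹ = x^(2^(n-2)+1)⟩`. -/
abbrev QA (n : ℕ) : Type := PresentedGroup (qaRels n)

/-- The generator `x` of `QA_n`. -/
def qx (n : ℕ) : QA n := PresentedGroup.of true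

/-- The generator `y` of `QA_n`. -/
def qy (n : ℕ) : QA n := PresentedGroup.of false

/-- The index-two subgroup `H₁ = ⟨x², y⟩` of `QA_n`. -/
def H1 (n : ℕ) : Subgroup (QA n) := Subgroup.closure {qx n ^ 2, qy n}

namespace QA3Aux

open Multiplicative Subgroup SemidirectProduct

theorem pow_eq_of_mod_eq {G : Type*} [Monoid G] {g : G} {N : ℕ} (hg : g ^ N = 1)
    {i j : ℕ} (h : i % N = j % N) : g ^ i = g ^ j := by
  conv_lhs => rw [← Nat.div_add_mod i N]
  conv_rhs => rw [← Nat.div_add_mod j N]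
  rw [pow_add, pow_add, pow_mul, hg, one_pow, pow_mul, hg, one_pow, h]

def powHom {G : Type*} [Group G] (g : G) (N : ℕ) [NeZero N] (hg : g ^ N = 1) :
    Multiplicative (ZMod N) →* G where
  toFun c := g ^ (Multiplicative.toAdd c).val
  map_one' := by simp
  map_mul' a b := by
    show g ^ (Multiplicative.toAdd (a * b)).val = _
    rw [toAdd_mul, ← pow_add]
    exact pow_eq_of_mod_eq hg
      (by rw [ZMod.val_add, Nat.mod_mod_of_dvd _ dvd_rfl])

theorem powHom_apply {G : Type*} [Group G] (g : G) (N : ℕ) [NeZero N] (hg : g ^ N = 1)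
    (c : Multiplicative (ZMod N)) :
    powHom g N hg c = g ^ (Multiplicative.toAdd c).val := rfl

theorem powHom_natCast {G : Type*} [Group G] (g : G) (N : ℕ) [NeZero N] (hg : g ^ N = 1)
    (k : ℕ) : powHom g N hg (ofAdd ((k : ZMod N))) = g ^ k := by
  rw [powHom_apply, toAdd_ofAdd]
  exact pow_eq_of_mod_eq hg (by rw [ZMod.val_natCast, Nat.mod_mod_of_dvd _ dvd_rfl])

theorem zmodHom_ext {G : Type*} [Monoid G] {N : ℕ} [NeZero N]
    {f₁ f₂ : Multiplicative (ZMod N) →* G}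
    (h : f₁ (ofAdd 1) = f₂ (ofAdd 1)) : f₁ = f₂ := by
  refine MonoidHom.ext fun c => ?_
  have hc : c = ofAdd (1 : ZMod N) ^ ZMod.val (Multiplicative.toAdd c) := by
    rw [← ofAdd_nsmul, Nat.smul_one_eq_cast, ZMod.natCast_zmod_val, ofAdd_toAdd]
  rw [hc, map_pow, map_pow, h]

variable (m : ℕ)

instance : NeZero (2 ^ (m + 3)) := ⟨by positivity⟩
instance : NeZero (2 ^ (m + 2)) := ⟨by positivity⟩

theorem uco : Nat.Coprime (2 ^ (m + 2) + 1) (2 ^ (m + 3)) :=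
  Nat.Coprime.pow_right _ (Nat.coprime_two_right.mpr ⟨2 ^ (m + 1), by ring⟩)

def uu : (ZMod (2 ^ (m + 3)))ˣ := ZMod.unitOfCoprime _ (uco m)

theorem uval : ((uu m : ZMod (2 ^ (m + 3)))) = ((2 ^ (m + 2) + 1 : ℕ) : ZMod (2 ^ (m + 3))) :=
  ZMod.coe_unitOfCoprime _ _

theorem uusq : uu m * uu m = 1 := by
  have hnat : (2 ^ (m + 2) + 1) * (2 ^ (m + 2) + 1) = 2 ^ (m + 3) * (2 ^ (m + 1) + 1) + 1 := by
    ring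
  apply Units.ext
  show ((uu m : ZMod (2 ^ (m + 3))) * (uu m : ZMod (2 ^ (m + 3)))) = 1
  rw [uval, ← Nat.cast_mul, hnat, Nat.cast_add, Nat.cast_mul, ZMod.natCast_self, zero_mul,
    zero_add, Nat.cast_one]

def σm : MulAut (Multiplicative (ZMod (2 ^ (m + 3)))) :=
  AddEquiv.toMultiplicative (AddAut.mulLeft (uu m))

theorem σm_apply (a : ZMod (2 ^ (m + 3))) :
    σm m (ofAdd a) = ofAdd ((uu m : ZMod (2 ^ (m + 3))) * a) := rfl

theorem σm_sq : σm m ^ 2 = 1 := by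
  apply MulEquiv.ext
  intro a
  show (σm m * σm m) a = a
  rw [MulAut.mul_apply]
  conv_lhs => rw [← ofAdd_toAdd a]
  rw [σm_apply, σm_apply, ← mul_assoc]
  rw [show ((uu m : ZMod (2 ^ (m + 3))) * (uu m : ZMod (2 ^ (m + 3)))) = 1 by
    rw [← Units.val_mul, uusq m, Units.val_one]]
  rw [one_mul, ofAdd_toAdd]

def act : Multiplicative (ZMod 2) →* MulAut (Multiplicative (ZMod (2 ^ (m + 3)))) :=
  powHom (σm m) 2 (σm_sq m)

abbrev Gm : Type := Multiplicative (ZMod (2 ^ (m + 3))) ⋊[act m] Multiplicative (ZMod 2)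

def xg : Gm m := inl (ofAdd 1)

def yg : Gm m := inr (ofAdd 1)

theorem act_ofAdd_one : act m (ofAdd 1) = σm m := by
  show σm m ^ (Multiplicative.toAdd (ofAdd (1 : ZMod 2))).val = σm m
  rw [toAdd_ofAdd, ZMod.val_one, pow_one]

theorem xg_pow (k : ℕ) : xg m ^ k = inl (ofAdd ((k : ZMod (2 ^ (m + 3))))) := by
  rw [xg, ← map_pow, ← ofAdd_nsmul, Nat.smul_one_eq_cast]

theorem yg_pow (k : ℕ) : yg m ^ k = inr (ofAdd ((k : ZMod 2))) := by
  rw [yg, ← map_pow, ← ofAdd_nsmul, Nat.smul_one_eq_cast]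

theorem hxN : xg m ^ (2 ^ (m + 3)) = 1 := by
  rw [xg_pow, ZMod.natCast_self, ofAdd_zero, map_one]

theorem hy2 : yg m ^ 2 = 1 := by
  rw [yg_pow, ZMod.natCast_self, ofAdd_zero, map_one]

theorem conj_rel : yg m * xg m * (yg m)⁻¹ = xg m ^ (2 ^ (m + 2) + 1) := by
  rw [xg_pow, xg, yg, ← map_inv, ← inl_aut, act_ofAdd_one, σm_apply, mul_one, uval]



theorem qaRels_eq : qaRels (m + 4) =
    {FreeGroup.of true ^ 2 ^ (m + 3), FreeGroup.of false ^ 2,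
     FreeGroup.of false * FreeGroup.of true * (FreeGroup.of false)⁻¹ *
       (FreeGroup.of true ^ (2 ^ (m + 2) + 1))⁻¹} := by
  have h1 : m + 4 - 1 = m + 3 := by omega
  have h2 : m + 4 - 2 = m + 2 := by omega
  rw [qaRels, h1, h2]

def mkh : FreeGroup Bool →* QA (m + 4) := QuotientGroup.mk' _

theorem rel_eq_one {r : FreeGroup Bool} (h : r ∈ qaRels (m + 4)) : mkh m r = 1 :=
  (QuotientGroup.eq_one_iff r).mpr (Subgroup.subset_normalClosure h)

theorem qx_eq : qx (m + 4) = mkh m (FreeGroup.of true) := rfl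
theorem qy_eq : qy (m + 4) = mkh m (FreeGroup.of false) := rfl

theorem relx : qx (m + 4) ^ (2 ^ (m + 3)) = 1 := by
  rw [qx_eq, ← map_pow]
  exact rel_eq_one m (by rw [qaRels_eq]; left; rfl)

theorem rely : qy (m + 4) ^ 2 = 1 := by
  rw [qy_eq, ← map_pow]
  exact rel_eq_one m (by rw [qaRels_eq]; right; left; rfl)

theorem relc : qy (m + 4) * qx (m + 4) * (qy (m + 4))⁻¹ = qx (m + 4) ^ (2 ^ (m + 2) + 1) := by
  have h := rel_eq_one m (r := FreeGroup.of false * FreeGroup.of true * (FreeGroup.of false)⁻¹ *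
       (FreeGroup.of true ^ (2 ^ (m + 2) + 1))⁻¹) (by rw [qaRels_eq]; right; right; rfl)
  rw [map_mul, map_mul, map_mul, map_inv, map_inv, map_pow, mul_inv_eq_one] at h
  rw [qx_eq, qy_eq, h]

def ψ : QA (m + 4) →* Gm m :=
  PresentedGroup.toGroup (f := fun b => if b then xg m else yg m) (by
    intro r hr
    rw [qaRels_eq] at hr
    rcases hr with rfl | rfl | rfl
    · rw [map_pow, FreeGroup.lift_apply_of, if_pos rfl]
      exact hxN m
    · rw [map_pow, FreeGroup.lift_apply_of, if_neg (by simp)]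
      exact hy2 m
    · rw [map_mul, map_mul, map_mul, map_inv, map_inv, map_pow, FreeGroup.lift_apply_of,
        FreeGroup.lift_apply_of, if_pos rfl, if_neg (by simp), mul_inv_eq_one]
      exact conj_rel m)

theorem ψ_qx : ψ m (qx (m + 4)) = xg m := PresentedGroup.toGroup.of _
theorem ψ_qy : ψ m (qy (m + 4)) = yg m := PresentedGroup.toGroup.of _

theorem compat : ∀ g, (powHom (qx (m + 4)) (2 ^ (m + 3)) (relx m)).comp
      ((act m) g).toMonoidHom
    = (MulAut.conj ((powHom (qy (m + 4)) 2 (rely m)) g)).toMonoidHom.comp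
      (powHom (qx (m + 4)) (2 ^ (m + 3)) (relx m)) := by
  intro g
  have hg : Multiplicative.toAdd g = 0 ∨ Multiplicative.toAdd g = 1 := by
    revert g; decide
  apply zmodHom_ext
  simp only [MonoidHom.comp_apply, MulEquiv.coe_toMonoidHom, MulAut.conj_apply]
  rcases hg with hg | hg
  · have hg1 : g = 1 := by rw [← ofAdd_toAdd g, hg, ofAdd_zero]
    rw [hg1]
    simp
  · have hg1 : g = ofAdd 1 := by rw [← ofAdd_toAdd g, hg]
    rw [hg1, act_ofAdd_one]
    have h1 : σm m (ofAdd (1 : ZMod (2 ^ (m + 3)))) =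
        ofAdd ((2 ^ (m + 2) + 1 : ℕ) : ZMod (2 ^ (m + 3))) := by
      rw [σm_apply, mul_one, uval]
    rw [h1, powHom_natCast]
    have h2 : (powHom (qy (m + 4)) 2 (rely m)) (ofAdd 1) = qy (m + 4) := by
      rw [show (1 : ZMod 2) = ((1 : ℕ) : ZMod 2) by norm_num, powHom_natCast, pow_one]
    have h3 : (powHom (qx (m + 4)) (2 ^ (m + 3)) (relx m)) (ofAdd 1) = qx (m + 4) := by
      rw [show (1 : ZMod (2 ^ (m + 3))) = ((1 : ℕ) : ZMod (2 ^ (m + 3))) by norm_num,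
        powHom_natCast, pow_one]
    rw [h2, h3, relc]

def φ : Gm m →* QA (m + 4) :=
  SemidirectProduct.lift (powHom (qx (m + 4)) (2 ^ (m + 3)) (relx m))
    (powHom (qy (m + 4)) 2 (rely m)) (compat m)

theorem φ_xg : φ m (xg m) = qx (m + 4) := by
  rw [xg, φ, SemidirectProduct.lift_inl]
  rw [show (1 : ZMod (2 ^ (m + 3))) = ((1 : ℕ) : ZMod (2 ^ (m + 3))) by norm_num,
    powHom_natCast, pow_one]

theorem φ_yg : φ m (yg m) = qy (m + 4) := by
  rw [yg, φ, SemidirectProduct.lift_inr]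
  rw [show (1 : ZMod 2) = ((1 : ℕ) : ZMod 2) by norm_num, powHom_natCast, pow_one]

def eqa : QA (m + 4) ≃* Gm m :=
  MonoidHom.toMulEquiv (ψ m) (φ m)
    (by
      apply PresentedGroup.ext
      intro b
      cases b
      · show φ m (ψ m (qy (m + 4))) = qy (m + 4)
        rw [ψ_qy, φ_yg]
      · show φ m (ψ m (qx (m + 4))) = qx (m + 4)
        rw [ψ_qx, φ_xg])
    (by
      apply SemidirectProduct.hom_ext
      · apply zmodHom_ext
        show ψ m (φ m (inl (ofAdd 1))) = inl (ofAdd 1)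
        have : (inl (ofAdd 1) : Gm m) = xg m := rfl
        rw [this, φ_xg, ψ_qx]
      · apply zmodHom_ext
        show ψ m (φ m (inr (ofAdd 1))) = inr (ofAdd 1)
        have : (inr (ofAdd 1) : Gm m) = yg m := rfl
        rw [this, φ_yg, ψ_qy])

theorem eqa_qx : eqa m (qx (m + 4)) = xg m := ψ_qx m
theorem eqa_qy : eqa m (qy (m + 4)) = yg m := ψ_qy m



def G1 : Subgroup (Gm m) := closure {xg m ^ 2, yg m}
def G2 : Subgroup (Gm m) := closure {xg m}
def G3 : Subgroup (Gm m) := closure {yg m * xg m}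

def gmEquivProd : Gm m ≃ (ZMod (2 ^ (m + 3))) × (ZMod 2) where
  toFun g := (Multiplicative.toAdd g.left, Multiplicative.toAdd g.right)
  invFun p := ⟨ofAdd p.1, ofAdd p.2⟩
  left_inv := fun ⟨a, b⟩ => rfl
  right_inv := fun p => rfl

instance : Finite (Gm m) := Finite.of_equiv _ (gmEquivProd m).symm

theorem card_Gm : Nat.card (Gm m) = 2 ^ (m + 3) * 2 := by
  rw [Nat.card_congr (gmEquivProd m), Nat.card_prod, Nat.card_zmod, Nat.card_zmod]

theorem xg_pow_eq_one_iff (k : ℕ) : xg m ^ k = 1 ↔ (2 ^ (m + 3) : ℕ) ∣ k := by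
  rw [xg_pow, show (1 : Gm m) = inl 1 from (map_one _).symm, inl_injective.eq_iff,
    show (1 : Multiplicative (ZMod (2 ^ (m + 3)))) = ofAdd 0 from rfl,
    Multiplicative.ofAdd.injective.eq_iff, ZMod.natCast_eq_zero_iff]

theorem yx_sq : (yg m * xg m) ^ 2 = xg m ^ (2 ^ (m + 2) + 2) := by
  have h : (yg m * xg m) * (yg m * xg m)
      = (yg m * xg m * (yg m)⁻¹) * (yg m * yg m) * xg m := by group
  rw [pow_two, h, conj_rel, show yg m * yg m = yg m ^ 2 from (pow_two _).symm, hy2, mul_one,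
    ← pow_succ]

theorem yx_pow_even (j : ℕ) : (yg m * xg m) ^ (2 * j) = xg m ^ ((2 ^ (m + 2) + 2) * j) := by
  rw [pow_mul, yx_sq, ← pow_mul]

theorem hyxN : (yg m * xg m) ^ (2 ^ (m + 3)) = 1 := by
  have he : (2 : ℕ) ^ (m + 3) = 2 * 2 ^ (m + 2) := by ring
  exact (congrArg (fun k : ℕ => (yg m * xg m) ^ k) he).trans
    (by rw [yx_pow_even, xg_pow_eq_one_iff]; exact ⟨2 ^ (m + 1) + 1, by ring⟩)

theorem rightHom_xg : rightHom (xg m) = 1 := rightHom_inl _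
theorem rightHom_yg : rightHom (yg m) = ofAdd (1 : ZMod 2) := rightHom_inr _

theorem zmod2_pow (k : ℕ) : (ofAdd (1 : ZMod 2)) ^ k = ofAdd ((k : ZMod 2)) := by
  rw [← ofAdd_nsmul, Nat.smul_one_eq_cast]

theorem yx_pow_eq_one (k : ℕ) (h : (yg m * xg m) ^ k = 1) : (2 ^ (m + 3) : ℕ) ∣ k := by
  have h2 : (2 : ℕ) ∣ k := by
    have hr := congrArg rightHom h
    rw [map_pow, map_mul, rightHom_xg, rightHom_yg, mul_one, zmod2_pow, map_one] at hr
    rw [← ZMod.natCast_eq_zero_iff, ← ofAdd_eq_one]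
    exact hr
  obtain ⟨j, rfl⟩ := h2
  rw [yx_pow_even, xg_pow_eq_one_iff] at h
  have hco : Nat.Coprime (2 ^ (m + 2)) (2 ^ (m + 1) + 1) :=
    (Nat.coprime_two_left.mpr ⟨2 ^ m, by ring⟩).pow_left _
  have h3 : (2 : ℕ) ^ (m + 2) ∣ (2 ^ (m + 1) + 1) * j := by
    have := h
    rw [show (2 ^ (m + 2) + 2) * j = 2 * ((2 ^ (m + 1) + 1) * j) by ring,
      show (2 : ℕ) ^ (m + 3) = 2 * 2 ^ (m + 2) by ring] at this
    exact (mul_dvd_mul_iff_left (by norm_num : (2:ℕ) ≠ 0)).mp this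
  have h4 : (2 : ℕ) ^ (m + 2) ∣ j := (Nat.Coprime.dvd_of_dvd_mul_left hco h3)
  obtain ⟨i, rfl⟩ := h4
  exact ⟨i, by ring⟩

theorem comm21 : Commute (xg m ^ 2) (yg m) := by
  have h : yg m * xg m ^ 2 * (yg m)⁻¹ = xg m ^ 2 := by
    have h1 : yg m * xg m ^ 2 * (yg m)⁻¹ = (yg m * xg m * (yg m)⁻¹) ^ 2 := conj_pow.symm
    rw [h1, conj_rel, ← pow_mul, show (2 ^ (m + 2) + 1) * 2 = 2 ^ (m + 3) + 2 by ring,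
      pow_add, hxN, one_mul]
  rw [mul_inv_eq_iff_eq_mul] at h
  exact h.symm

theorem hx2ord : (xg m ^ 2) ^ (2 ^ (m + 2)) = 1 := by
  rw [← pow_mul, show 2 * 2 ^ (m + 2) = 2 ^ (m + 3) by ring, hxN]

def θ1 : Multiplicative (ZMod (2 ^ (m + 2))) × Multiplicative (ZMod 2) →* Gm m :=
  MonoidHom.noncommCoprod (powHom (xg m ^ 2) (2 ^ (m + 2)) (hx2ord m))
    (powHom (yg m) 2 (hy2 m)) (fun a b => (comm21 m).pow_pow _ _)

def θ2 : Multiplicative (ZMod (2 ^ (m + 3))) →* Gm m := powHom (xg m) (2 ^ (m + 3)) (hxN m)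

def θ3 : Multiplicative (ZMod (2 ^ (m + 3))) →* Gm m :=
  powHom (yg m * xg m) (2 ^ (m + 3)) (hyxN m)

theorem val_eq_zero_of_dvd {N : ℕ} [NeZero N] (a : ZMod N) (h : N ∣ a.val) : a = 0 := by
  have hlt := ZMod.val_lt a
  rcases Nat.eq_zero_of_dvd_of_lt h hlt with hv
  exact (ZMod.val_eq_zero a).mp hv

theorem mult_eq_one_of_toAdd {N : ℕ} (a : Multiplicative (ZMod N))
    (h : Multiplicative.toAdd a = 0) : a = 1 := by
  rw [← ofAdd_toAdd a, h, ofAdd_zero]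

theorem injθ2 : Function.Injective (θ2 m) := by
  rw [injective_iff_map_eq_one]
  intro a h
  rw [θ2, powHom_apply, xg_pow_eq_one_iff] at h
  exact mult_eq_one_of_toAdd a (val_eq_zero_of_dvd _ h ▸ rfl)

theorem injθ3 : Function.Injective (θ3 m) := by
  rw [injective_iff_map_eq_one]
  intro a h
  rw [θ3, powHom_apply] at h
  exact mult_eq_one_of_toAdd a (val_eq_zero_of_dvd _ (yx_pow_eq_one m _ h) ▸ rfl)

theorem θ1_apply (a : Multiplicative (ZMod (2 ^ (m + 2)))) (b : Multiplicative (ZMod 2)) :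
    θ1 m (a, b) = (xg m ^ 2) ^ (Multiplicative.toAdd a).val
      * yg m ^ (Multiplicative.toAdd b).val := rfl

theorem injθ1 : Function.Injective (θ1 m) := by
  rw [injective_iff_map_eq_one]
  rintro ⟨a, b⟩ h
  rw [θ1_apply] at h
  have hb : (Multiplicative.toAdd b).val = 0 := by
    have hr := congrArg rightHom h
    simp only [map_mul, map_pow, map_one, rightHom_xg, rightHom_yg, one_pow, one_mul,
      zmod2_pow] at hr
    have hd : (2 : ℕ) ∣ (Multiplicative.toAdd b).val := by
      rw [← ZMod.natCast_eq_zero_iff, ← ofAdd_eq_one]; exact hr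
    have := ZMod.val_lt (Multiplicative.toAdd b)
    omega
  rw [hb, pow_zero, mul_one, ← pow_mul, xg_pow_eq_one_iff] at h
  have ha : (Multiplicative.toAdd a).val = 0 := by
    have hlt := ZMod.val_lt (Multiplicative.toAdd a)
    obtain ⟨c, hc⟩ := h
    rw [show (2 : ℕ) ^ (m + 3) * c = 2 * (2 ^ (m + 2) * c) by ring] at hc
    have hval : (Multiplicative.toAdd a).val = 2 ^ (m + 2) * c := by omega
    rcases Nat.eq_zero_or_pos c with rfl | hcpos
    · simpa using hval
    · exfalso
      have hge := Nat.le_mul_of_pos_right (2 ^ (m + 2)) hcpos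
      omega
  have ha' : a = 1 := mult_eq_one_of_toAdd a ((ZMod.val_eq_zero _).mp ha)
  have hb' : b = 1 := mult_eq_one_of_toAdd b ((ZMod.val_eq_zero _).mp hb)
  rw [ha', hb']
  rfl

theorem range_θ2 : (θ2 m).range = G2 m := by
  apply le_antisymm
  · rintro g ⟨a, rfl⟩
    exact pow_mem (subset_closure (Set.mem_singleton _)) _
  · rw [G2, closure_le]
    intro g hg
    rw [Set.mem_singleton_iff] at hg
    subst hg
    exact ⟨ofAdd ((1 : ℕ) : ZMod (2 ^ (m + 3))), by rw [θ2, powHom_natCast, pow_one]⟩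

theorem range_θ3 : (θ3 m).range = G3 m := by
  apply le_antisymm
  · rintro g ⟨a, rfl⟩
    exact pow_mem (subset_closure (Set.mem_singleton _)) _
  · rw [G3, closure_le]
    intro g hg
    rw [Set.mem_singleton_iff] at hg
    subst hg
    exact ⟨ofAdd ((1 : ℕ) : ZMod (2 ^ (m + 3))), by rw [θ3, powHom_natCast, pow_one]⟩

theorem range_θ1 : (θ1 m).range = G1 m := by
  apply le_antisymm
  · rintro g ⟨⟨a, b⟩, rfl⟩
    rw [θ1_apply]
    exact mul_mem (pow_mem (subset_closure (by left; rfl)) _)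
      (pow_mem (subset_closure (by right; rfl)) _)
  · rw [G1, closure_le]
    intro g hg
    rcases hg with rfl | hg
    · refine ⟨(ofAdd ((1 : ℕ) : ZMod (2 ^ (m + 2))), 1), ?_⟩
      show θ1 m (_, _) = _
      rw [θ1_apply]
      have h1 : (Multiplicative.toAdd (ofAdd (((1 : ℕ) : ZMod (2 ^ (m + 2)))))).val = 1 := by
        rw [toAdd_ofAdd, ZMod.val_natCast]
        exact Nat.mod_eq_of_lt (by have := Nat.one_lt_two_pow (n := m + 2) (by omega); omega)
      rw [h1, pow_one]
      simp
    · rw [Set.mem_singleton_iff] at hg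
      subst hg
      refine ⟨(1, ofAdd ((1 : ℕ) : ZMod 2)), ?_⟩
      show θ1 m (_, _) = _
      rw [θ1_apply]
      have h1 : (Multiplicative.toAdd (ofAdd (((1 : ℕ) : ZMod 2)))).val = 1 := rfl
      rw [h1, pow_one]
      simp

noncomputable def isoG1 : (G1 m : Subgroup (Gm m)) ≃*
    Multiplicative (ZMod (2 ^ (m + 2))) × Multiplicative (ZMod 2) :=
  ((MonoidHom.ofInjective (injθ1 m)).trans (MulEquiv.subgroupCongr (range_θ1 m))).symm

noncomputable def isoG2 : (G2 m : Subgroup (Gm m)) ≃* Multiplicative (ZMod (2 ^ (m + 3))) :=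
  ((MonoidHom.ofInjective (injθ2 m)).trans (MulEquiv.subgroupCongr (range_θ2 m))).symm

noncomputable def isoG3 : (G3 m : Subgroup (Gm m)) ≃* Multiplicative (ZMod (2 ^ (m + 3))) :=
  ((MonoidHom.ofInjective (injθ3 m)).trans (MulEquiv.subgroupCongr (range_θ3 m))).symm

theorem card_mult_zmod (N : ℕ) : Nat.card (Multiplicative (ZMod N)) = N := by
  rw [Nat.card_congr Multiplicative.toAdd, Nat.card_zmod]

theorem card_G1 : Nat.card (G1 m) = 2 ^ (m + 3) := by
  rw [Nat.card_congr (isoG1 m).toEquiv, Nat.card_prod, card_mult_zmod, card_mult_zmod]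
  ring

theorem card_G2 : Nat.card (G2 m) = 2 ^ (m + 3) := by
  rw [Nat.card_congr (isoG2 m).toEquiv, card_mult_zmod]

theorem card_G3 : Nat.card (G3 m) = 2 ^ (m + 3) := by
  rw [Nat.card_congr (isoG3 m).toEquiv, card_mult_zmod]

theorem index_of_card (K : Subgroup (Gm m)) (h : Nat.card K = 2 ^ (m + 3)) : K.index = 2 := by
  have hh := Subgroup.card_mul_index K
  rw [h, card_Gm] at hh
  exact Nat.eq_of_mul_eq_mul_left (by positivity) hh

theorem index_G1 : (G1 m).index = 2 := index_of_card m _ (card_G1 m)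
theorem index_G2 : (G2 m).index = 2 := index_of_card m _ (card_G2 m)
theorem index_G3 : (G3 m).index = 2 := index_of_card m _ (card_G3 m)

theorem gen_top (K : Subgroup (Gm m)) (hx : xg m ∈ K) (hy : yg m ∈ K) : K = ⊤ := by
  rw [eq_top_iff]
  intro g _
  have hrep : g = xg m ^ (Multiplicative.toAdd g.left).val
      * yg m ^ (Multiplicative.toAdd g.right).val := by
    rw [xg_pow, yg_pow, ZMod.natCast_zmod_val, ZMod.natCast_zmod_val, ofAdd_toAdd, ofAdd_toAdd,
      inl_left_mul_inr_right]
  rw [hrep]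
  exact mul_mem (pow_mem hx _) (pow_mem hy _)

theorem index_two_iff (K : Subgroup (Gm m)) :
    K.index = 2 ↔ (K = G1 m ∨ K = G2 m ∨ K = G3 m) := by
  constructor
  · intro hK
    have hcard : Nat.card K = 2 ^ (m + 3) := by
      have hh := Subgroup.card_mul_index K
      rw [hK, card_Gm] at hh
      exact Nat.eq_of_mul_eq_mul_right (by norm_num) hh
    by_cases hx : xg m ∈ K
    · by_cases hy : yg m ∈ K
      · exfalso
        have := gen_top m K hx hy
        rw [this, Subgroup.index_top] at hK
        omega
      · right; left
        refine (Subgroup.eq_of_le_of_card_ge ?_ ?_).symm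
        · rw [G2, closure_le]
          intro g hg
          rw [Set.mem_singleton_iff] at hg
          subst hg
          exact hx
        · rw [hcard, card_G2]
    · by_cases hy : yg m ∈ K
      · left
        refine (Subgroup.eq_of_le_of_card_ge ?_ ?_).symm
        · rw [G1, closure_le]
          intro g hg
          rcases hg with rfl | hg
          · exact Subgroup.sq_mem_of_index_two hK _
          · rw [Set.mem_singleton_iff] at hg; subst hg; exact hy
        · rw [hcard, card_G1]
      · right; right
        have hyx : yg m * xg m ∈ K :=
          (Subgroup.mul_mem_iff_of_index_two hK).mpr (iff_of_false hy hx)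
        refine (Subgroup.eq_of_le_of_card_ge ?_ ?_).symm
        · rw [G3, closure_le]
          intro g hg
          rw [Set.mem_singleton_iff] at hg
          subst hg
          exact hyx
        · rw [hcard, card_G3]
  · rintro (rfl | rfl | rfl)
    exacts [index_G1 m, index_G2 m, index_G3 m]

end QA3Aux

/-- For `n ≥ 4`, the index-two subgroups of `QA_n` are exactly
`H₁ = ⟨x², y⟩`, `H₂ = ⟨x⟩` and `H₃ = ⟨yx⟩`; moreover `H₁ ≅ C_(2^(n-2)) × C_2` and
`H₂ ≅ H₃ ≅ C_(2^(n-1))`. -/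
theorem stmt3 (n : ℕ) (hn : 4 ≤ n) :
    (∀ H : Subgroup (QA n), H.index = 2 ↔
        (H = H1 n ∨ H = Subgroup.closure {qx n} ∨ H = Subgroup.closure {qy n * qx n})) ∧
    Nonempty ((H1 n) ≃* Multiplicative (ZMod (2 ^ (n - 2))) × Multiplicative (ZMod 2)) ∧
    Nonempty ((Subgroup.closure {qx n} : Subgroup (QA n)) ≃*
      Multiplicative (ZMod (2 ^ (n - 1)))) ∧
    Nonempty ((Subgroup.closure {qy n * qx n} : Subgroup (QA n)) ≃*
      Multiplicative (ZMod (2 ^ (n - 1)))) := by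

  obtain ⟨m, rfl⟩ : ∃ m, n = m + 4 := ⟨n - 4, by omega⟩
  have hs2 : m + 4 - 2 = m + 2 := by omega
  have hs1 : m + 4 - 1 = m + 3 := by omega
  rw [hs2, hs1]
  set e := QA3Aux.eqa m with he
  have hinj : Function.Injective e.toMonoidHom := fun a b hab => e.injective hab
  have hsurj : Function.Surjective e.toMonoidHom := fun g => ⟨e.symm g, e.apply_symm_apply g⟩
  have hmap : ∀ H : Subgroup (QA (m + 4)), (H.map e.toMonoidHom).index = H.index := fun H =>
    H.index_map_eq hsurj
      (by rw [(MonoidHom.ker_eq_bot_iff e.toMonoidHom).mpr hinj]; exact bot_le)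
  have hmap1 : (H1 (m + 4)).map e.toMonoidHom = QA3Aux.G1 m := by
    rw [H1, QA3Aux.G1, MonoidHom.map_closure]
    congr 1
    rw [Set.image_insert_eq, Set.image_singleton, map_pow,
      show e.toMonoidHom (qx (m + 4)) = QA3Aux.xg m from QA3Aux.eqa_qx m,
      show e.toMonoidHom (qy (m + 4)) = QA3Aux.yg m from QA3Aux.eqa_qy m]
  have hmap2 : (Subgroup.closure {qx (m + 4)}).map e.toMonoidHom = QA3Aux.G2 m := by
    rw [QA3Aux.G2, MonoidHom.map_closure]
    congr 1
    rw [Set.image_singleton,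
      show e.toMonoidHom (qx (m + 4)) = QA3Aux.xg m from QA3Aux.eqa_qx m]
  have hmap3 : (Subgroup.closure {qy (m + 4) * qx (m + 4)}).map e.toMonoidHom
      = QA3Aux.G3 m := by
    rw [QA3Aux.G3, MonoidHom.map_closure]
    congr 1
    rw [Set.image_singleton, map_mul,
      show e.toMonoidHom (qx (m + 4)) = QA3Aux.xg m from QA3Aux.eqa_qx m,
      show e.toMonoidHom (qy (m + 4)) = QA3Aux.yg m from QA3Aux.eqa_qy m]
  refine ⟨?_, ⟨?_⟩, ⟨?_⟩, ⟨?_⟩⟩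
  · intro H
    rw [← hmap H, QA3Aux.index_two_iff, ← hmap1, ← hmap2, ← hmap3]
    simp only [(Subgroup.map_injective hinj).eq_iff]
  · exact (e.subgroupMap (H1 (m + 4))).trans
      ((MulEquiv.subgroupCongr hmap1).trans (QA3Aux.isoG1 m))
  · exact (e.subgroupMap (Subgroup.closure {qx (m + 4)})).trans
      ((MulEquiv.subgroupCongr hmap2).trans (QA3Aux.isoG2 m))
  · exact (e.subgroupMap (Subgroup.closure {qy (m + 4) * qx (m + 4)})).trans
      ((MulEquiv.subgroupCongr hmap3).trans (QA3Aux.isoG3 m))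
end

section
/- Let n ≥ 4. The quasi-abelian group QA_n has exactly 5·2^{n-3} conjugacy classes. -/
namespace QAaux

/-- Concrete model of `QA (k+3)`: `xa i` is `x^i`, `xb i` is `x^i * y`. -/
inductive Qc (k : ℕ) : Type
  | xa : ZMod (2 ^ (k + 2)) → Qc k
  | xb : ZMod (2 ^ (k + 2)) → Qc k

namespace Qc

variable {k : ℕ}

/-- The multiplier `2^(k+1) + 1`. -/
def R (k : ℕ) : ZMod (2 ^ (k + 2)) := 2 ^ (k + 1) + 1

lemma R_natCast : R k = ((2 ^ (k + 1) + 1 : ℕ) : ZMod (2 ^ (k + 2))) := by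
  unfold R; push_cast; ring

lemma two_pow_succ_zero : ((2 : ZMod (2 ^ (k + 2))) ^ (k + 1) + 2 ^ (k + 1)) = 0 := by
  have : ((2 : ZMod (2 ^ (k + 2))) ^ (k + 1) + 2 ^ (k + 1)) =
      ((2 ^ (k + 2) : ℕ) : ZMod (2 ^ (k + 2))) := by push_cast; ring
  rw [this, ZMod.natCast_self]

lemma two_pow_mul_zero : ((2 : ZMod (2 ^ (k + 2))) ^ (k + 1) * 2 ^ (k + 1)) = 0 := by
  have : ((2 : ZMod (2 ^ (k + 2))) ^ (k + 1) * 2 ^ (k + 1)) =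
      ((2 ^ (k + 1 + (k + 1)) : ℕ) : ZMod (2 ^ (k + 2))) := by push_cast [pow_add]; ring
  rw [this, ZMod.natCast_eq_zero_iff]
  exact pow_dvd_pow 2 (by omega)

lemma RR : R k * R k = 1 := by
  have e : R k * R k = 2 ^ (k + 1) * 2 ^ (k + 1) + (2 ^ (k + 1) + 2 ^ (k + 1)) + 1 := by
    unfold R; ring
  rw [e, two_pow_mul_zero, two_pow_succ_zero, zero_add, zero_add]

instance : Mul (Qc k) :=
  ⟨fun g g' => match g, g' with
    | xa i, xa j => xa (i + j)
    | xa i, xb j => xb (i + j)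
    | xb i, xa j => xb (i + R k * j)
    | xb i, xb j => xa (i + R k * j)⟩

instance : One (Qc k) := ⟨xa 0⟩

instance : Inv (Qc k) :=
  ⟨fun g => match g with
    | xa i => xa (-i)
    | xb i => xb (-(R k * i))⟩

@[simp] lemma xa_mul_xa (i j : ZMod (2 ^ (k + 2))) : xa i * xa j = xa (i + j) := rfl
@[simp] lemma xa_mul_xb (i j : ZMod (2 ^ (k + 2))) : xa i * xb j = xb (i + j) := rfl
@[simp] lemma xb_mul_xa (i j : ZMod (2 ^ (k + 2))) : xb i * xa j = xb (i + R k * j) := rfl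
@[simp] lemma xb_mul_xb (i j : ZMod (2 ^ (k + 2))) : xb i * xb j = xa (i + R k * j) := rfl
@[simp] lemma one_def : (1 : Qc k) = xa 0 := rfl
@[simp] lemma inv_xa (i : ZMod (2 ^ (k + 2))) : (xa i)⁻¹ = xa (-i) := rfl
@[simp] lemma inv_xb (i : ZMod (2 ^ (k + 2))) : (xb i)⁻¹ = xb (-(R k * i)) := rfl

instance : Group (Qc k) where
  mul_assoc a b c := by
    rcases a with i | i <;> rcases b with j | j <;> rcases c with l | l <;>
      simp only [xa_mul_xa, xa_mul_xb, xb_mul_xa, xb_mul_xb, xa.injEq, xb.injEq] <;>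
      first
        | ring1
        | linear_combination (l : ZMod (2 ^ (k + 2))) * RR
        | linear_combination (-l : ZMod (2 ^ (k + 2))) * RR
  one_mul a := by rcases a with i | i <;> simp
  mul_one a := by rcases a with i | i <;> simp
  inv_mul_cancel a := by
    rcases a with i | i <;>
      simp only [inv_xa, inv_xb, xa_mul_xa, xb_mul_xb, one_def, xa.injEq] <;> ring

lemma xa_pow (i : ZMod (2 ^ (k + 2))) (m : ℕ) : (xa i) ^ m = xa ((m : ZMod (2 ^ (k + 2))) * i) := by
  induction m with
  | zero => simp
  | succ m ih => rw [pow_succ, ih, xa_mul_xa]; push_cast; ring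

end Qc



lemma rel_one {n : ℕ} {r : FreeGroup Bool} (h : r ∈ qaRels n) :
    PresentedGroup.mk (qaRels n) r = 1 :=
  (QuotientGroup.eq_one_iff _).mpr (Subgroup.subset_normalClosure h)

variable (k : ℕ)

lemma Xpow_M : qx (k + 3) ^ 2 ^ (k + 2) = 1 := by
  have h : (FreeGroup.of true ^ 2 ^ (k + 3 - 1)) ∈ qaRels (k + 3) := Set.mem_insert _ _
  have := rel_one h
  rw [map_pow] at this
  exact this

lemma Ysq : qy (k + 3) * qy (k + 3) = 1 := by
  have h : (FreeGroup.of false ^ 2) ∈ qaRels (k + 3) := by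
    right; exact Set.mem_insert _ _
  have := rel_one h
  rw [map_pow, pow_two] at this
  exact this

lemma Yinv : (qy (k + 3))⁻¹ = qy (k + 3) :=
  inv_eq_of_mul_eq_one_right (Ysq k)

lemma Yconj : qy (k + 3) * qx (k + 3) * (qy (k + 3))⁻¹ = qx (k + 3) ^ (2 ^ (k + 1) + 1) := by
  have h : (FreeGroup.of false * FreeGroup.of true * (FreeGroup.of false)⁻¹ *
      (FreeGroup.of true ^ (2 ^ (k + 3 - 2) + 1))⁻¹) ∈ qaRels (k + 3) := by
    right; right; rfl
  have := rel_one h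
  simp only [map_mul, map_inv, map_pow] at this
  have h2 : (2 : ℕ) ^ (k + 3 - 2) + 1 = 2 ^ (k + 1) + 1 := rfl
  rw [h2] at this
  exact eq_of_mul_inv_eq_one this

lemma Yconj_pow (j : ℕ) :
    qy (k + 3) * qx (k + 3) ^ j = qx (k + 3) ^ ((2 ^ (k + 1) + 1) * j) * qy (k + 3) := by
  have h : qy (k + 3) * qx (k + 3) ^ j * (qy (k + 3))⁻¹ =
      qx (k + 3) ^ ((2 ^ (k + 1) + 1) * j) := by
    rw [← conj_pow, Yconj, ← pow_mul]
  rw [← h, Yinv, mul_assoc, mul_assoc, Ysq k, mul_one]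

lemma Xpow_mod (j : ℕ) : qx (k + 3) ^ j = qx (k + 3) ^ (j % 2 ^ (k + 2)) := by
  conv_lhs => rw [← Nat.div_add_mod j (2 ^ (k + 2))]
  rw [pow_add, pow_mul, Xpow_M, one_pow, one_mul]

/-- `chi c = x ^ c` for `c : ZMod (2^(k+2))`. -/
def chi : ZMod (2 ^ (k + 2)) → QA (k + 3) := fun c => qx (k + 3) ^ c.val

lemma chi_natCast (j : ℕ) : chi k (j : ZMod (2 ^ (k + 2))) = qx (k + 3) ^ j := by
  rw [chi, ZMod.val_natCast, ← Xpow_mod]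

lemma natCast_val_self {m : ℕ} [NeZero m] (c : ZMod m) : ((c.val : ℕ) : ZMod m) = c := by
  rw [ZMod.natCast_val, ZMod.cast_id]

lemma chi_add (c d : ZMod (2 ^ (k + 2))) : chi k (c + d) = chi k c * chi k d := by
  have h : c + d = ((c.val + d.val : ℕ) : ZMod (2 ^ (k + 2))) := by
    push_cast [natCast_val_self]; ring
  rw [h, chi_natCast, pow_add, chi, chi]

lemma chi_zero : chi k 0 = 1 := by
  have : (0 : ZMod (2 ^ (k + 2))) = ((0 : ℕ) : ZMod (2 ^ (k + 2))) := by norm_cast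
  rw [this, chi_natCast, pow_zero]

lemma R_cast : (Qc.R k : ZMod (2 ^ (k + 2))) = ((2 ^ (k + 1) + 1 : ℕ) : ZMod (2 ^ (k + 2))) :=
  Qc.R_natCast

lemma Y_chi (c : ZMod (2 ^ (k + 2))) :
    qy (k + 3) * chi k c = chi k (Qc.R k * c) * qy (k + 3) := by
  have h : Qc.R k * c = (((2 ^ (k + 1) + 1) * c.val : ℕ) : ZMod (2 ^ (k + 2))) := by
    rw [R_cast]; push_cast [natCast_val_self]; ring
  rw [h, chi_natCast, chi, Yconj_pow]

end QAaux

namespace QAaux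

variable (k : ℕ)

/-- Images of the generators in the concrete model. -/
def gen : Bool → Qc k
  | true => Qc.xa 1
  | false => Qc.xb 0

@[simp] lemma gen_true : gen k true = Qc.xa 1 := rfl
@[simp] lemma gen_false : gen k false = Qc.xb 0 := rfl

lemma lift_rels : ∀ r ∈ qaRels (k + 3), FreeGroup.lift (gen k) r = 1 := by
  intro r hr
  simp only [qaRels, Set.mem_insert_iff, Set.mem_singleton_iff] at hr
  rcases hr with rfl | rfl | rfl
  · rw [map_pow, FreeGroup.lift_apply_of, gen_true, Qc.xa_pow]
    have h : ((2 ^ (k + 3 - 1) : ℕ) : ZMod (2 ^ (k + 2))) = 0 := ZMod.natCast_self _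
    rw [mul_one, h, Qc.one_def]
  · rw [map_pow, FreeGroup.lift_apply_of, gen_false, pow_two, Qc.xb_mul_xb, Qc.one_def,
      Qc.xa.injEq]
    ring
  · simp only [map_mul, map_inv, map_pow, FreeGroup.lift_apply_of, gen_true, gen_false]
    have e1 : Qc.xb (0 : ZMod (2 ^ (k + 2))) * Qc.xa 1 = Qc.xb (Qc.R k) := by
      rw [Qc.xb_mul_xa, zero_add, mul_one]
    have e2 : (Qc.xb (0 : ZMod (2 ^ (k + 2))))⁻¹ = Qc.xb 0 := by
      rw [Qc.inv_xb, mul_zero, neg_zero]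
    have e3 : Qc.xb (Qc.R k) * Qc.xb 0 = Qc.xa (Qc.R k) := by
      rw [Qc.xb_mul_xb, mul_zero, add_zero]
    have e4 : (Qc.xa (1 : ZMod (2 ^ (k + 2)))) ^ (2 ^ (k + 3 - 2) + 1) = Qc.xa (Qc.R k) := by
      rw [show k + 3 - 2 = k + 1 from rfl, Qc.xa_pow, mul_one, ← Qc.R_natCast]
    rw [e1, e2, e3, e4, mul_inv_cancel]

def phi : QA (k + 3) →* Qc k := PresentedGroup.toGroup (lift_rels k)

@[simp] lemma phi_x : phi k (qx (k + 3)) = Qc.xa 1 := PresentedGroup.toGroup.of _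

@[simp] lemma phi_y : phi k (qy (k + 3)) = Qc.xb 0 := PresentedGroup.toGroup.of _

def psiFun : Qc k → QA (k + 3)
  | Qc.xa i => chi k i
  | Qc.xb i => chi k i * qy (k + 3)

lemma psiFun_mul (g g' : Qc k) : psiFun k (g * g') = psiFun k g * psiFun k g' := by
  rcases g with i | i <;> rcases g' with j | j <;>
    simp only [psiFun, Qc.xa_mul_xa, Qc.xa_mul_xb, Qc.xb_mul_xa, Qc.xb_mul_xb, chi_add]
  · rw [mul_assoc]
  · rw [mul_assoc, ← Y_chi, ← mul_assoc]
  · rw [mul_assoc, ← mul_assoc (qy (k + 3)), Y_chi, mul_assoc (chi k (Qc.R k * j)), Ysq,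
      mul_one]

def psi : Qc k →* QA (k + 3) := MonoidHom.mk' (psiFun k) (psiFun_mul k)

lemma psi_phi : (psi k).comp (phi k) = MonoidHom.id _ := by
  ext x
  rcases x with _ | _
  · show psi k (phi k (qy (k + 3))) = qy (k + 3)
    rw [phi_y]
    show chi k 0 * qy (k + 3) = qy (k + 3)
    rw [chi_zero, one_mul]
  · show psi k (phi k (qx (k + 3))) = qx (k + 3)
    rw [phi_x]
    show chi k 1 = qx (k + 3)
    haveI : Fact (1 < 2 ^ (k + 2)) := ⟨Nat.one_lt_two_pow (by omega)⟩
    rw [chi, ZMod.val_one, pow_one]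

lemma phi_psi : (phi k).comp (psi k) = MonoidHom.id _ := by
  apply MonoidHom.ext
  intro g
  rcases g with i | i
  · show phi k (chi k i) = Qc.xa i
    rw [chi, map_pow, phi_x, Qc.xa_pow, natCast_val_self, mul_one]
  · show phi k (chi k i * qy (k + 3)) = Qc.xb i
    rw [map_mul, chi, map_pow, phi_x, phi_y, Qc.xa_pow, natCast_val_self, mul_one,
      Qc.xa_mul_xb, add_zero]

def qaEquiv : QA (k + 3) ≃* Qc k :=
  MonoidHom.toMulEquiv (phi k) (psi k) (psi_phi k) (phi_psi k)

end QAaux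

namespace QAaux
namespace Qc

variable {k : ℕ}

instance : NeZero (2 ^ (k + 2)) := ⟨by positivity⟩
instance : NeZero (2 ^ (k + 1)) := ⟨by positivity⟩

lemma two_pow_succ' : (2 : ℕ) ^ (k + 2) = 2 * 2 ^ (k + 1) := by rw [pow_succ]; ring

/-- Doubling map `ZMod (2^(k+1)) → ZMod (2^(k+2))`. -/
def dbl (c : ZMod (2 ^ (k + 1))) : ZMod (2 ^ (k + 2)) := ((2 * c.val : ℕ) : ZMod (2 ^ (k + 2)))

/-- Halving map `ZMod (2^(k+2)) → ZMod (2^(k+1))`. -/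
def hlf (i : ZMod (2 ^ (k + 2))) : ZMod (2 ^ (k + 1)) := ((i.val / 2 : ℕ) : ZMod (2 ^ (k + 1)))

lemma hlf_dbl (c : ZMod (2 ^ (k + 1))) : hlf (dbl c) = c := by
  unfold hlf dbl
  have hc : c.val < 2 ^ (k + 1) := ZMod.val_lt c
  have hM : (2 : ℕ) ^ (k + 2) = 2 * 2 ^ (k + 1) := two_pow_succ'
  rw [ZMod.val_natCast, Nat.mod_eq_of_lt (by omega), Nat.mul_div_cancel_left _ two_pos,
    QAaux.natCast_val_self]

lemma dbl_even (c : ZMod (2 ^ (k + 1))) : 2 ∣ (dbl c).val := by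
  unfold dbl
  rw [ZMod.val_natCast]
  exact (Nat.dvd_mod_iff (by rw [two_pow_succ']; exact Dvd.intro _ rfl)).mpr ⟨c.val, rfl⟩

lemma dbl_hlf (i : ZMod (2 ^ (k + 2))) (hi : 2 ∣ i.val) : dbl (hlf i) = i := by
  unfold hlf dbl
  have hM : (2 : ℕ) ^ (k + 2) = 2 * 2 ^ (k + 1) := two_pow_succ'
  have hv : i.val < 2 ^ (k + 2) := ZMod.val_lt i
  rw [ZMod.val_natCast, Nat.mod_eq_of_lt (by omega), Nat.mul_div_cancel' hi,
    QAaux.natCast_val_self]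

lemma pow_dvd_aux (v : ℕ) : 2 ^ (k + 2) ∣ 2 ^ (k + 1) * v ↔ 2 ∣ v := by
  rw [two_pow_succ', mul_comm 2 (2 ^ (k + 1))]
  exact Nat.mul_dvd_mul_iff_left (by positivity)

lemma R_fix (i : ZMod (2 ^ (k + 2))) : R k * i = i ↔ 2 ∣ i.val := by
  have h2 : ((2 ^ (k + 1) * i.val : ℕ) : ZMod (2 ^ (k + 2))) = R k * i - i := by
    unfold R; push_cast [QAaux.natCast_val_self]; ring
  constructor
  · intro h
    have h0 : (2 : ℕ) ^ (k + 2) ∣ 2 ^ (k + 1) * i.val := by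
      rw [← ZMod.natCast_eq_zero_iff, h2, h, sub_self]
    exact (pow_dvd_aux i.val).mp h0
  · intro h
    have h0 : ((2 ^ (k + 1) * i.val : ℕ) : ZMod (2 ^ (k + 2))) = 0 := by
      rw [ZMod.natCast_eq_zero_iff]
      exact (pow_dvd_aux i.val).mpr h
    rw [h2] at h0
    linear_combination h0

/-- Explicit classification of commuting pairs in `Qc k`. -/
def commuteEquiv (k : ℕ) :
    { p : Qc k × Qc k // Commute p.1 p.2 } ≃
      (ZMod (2 ^ (k + 2)) × ZMod (2 ^ (k + 2))) ⊕ (ZMod (2 ^ (k + 2)) × ZMod (2 ^ (k + 1))) ⊕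
      (ZMod (2 ^ (k + 2)) × ZMod (2 ^ (k + 1))) ⊕ (ZMod (2 ^ (k + 2)) × ZMod (2 ^ (k + 1))) where
  toFun := fun
    | ⟨(xa i, xa j), _⟩ => Sum.inl (i, j)
    | ⟨(xa i, xb j), _⟩ => Sum.inr (Sum.inl (j, hlf i))
    | ⟨(xb i, xa j), _⟩ => Sum.inr (Sum.inr (Sum.inl (i, hlf j)))
    | ⟨(xb i, xb j), _⟩ => Sum.inr (Sum.inr (Sum.inr (i, hlf (j - i))))
  invFun := fun
    | .inl (i, j) => ⟨(xa i, xa j), by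
        show xa i * xa j = xa j * xa i
        rw [xa_mul_xa, xa_mul_xa, add_comm]⟩
    | .inr (.inl (j, c)) => ⟨(xa (dbl c), xb j), by
        show xa (dbl c) * xb j = xb j * xa (dbl c)
        rw [xa_mul_xb, xb_mul_xa, (R_fix _).mpr (dbl_even c), add_comm]⟩
    | .inr (.inr (.inl (i, c))) => ⟨(xb i, xa (dbl c)), by
        show xb i * xa (dbl c) = xa (dbl c) * xb i
        rw [xb_mul_xa, xa_mul_xb, (R_fix _).mpr (dbl_even c), add_comm]⟩
    | .inr (.inr (.inr (i, c))) => ⟨(xb i, xb (i + dbl c)), by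
        show xb i * xb (i + dbl c) = xb (i + dbl c) * xb i
        rw [xb_mul_xb, xb_mul_xb]
        exact congrArg xa (by rw [mul_add, (R_fix _).mpr (dbl_even c)]; ring)⟩
  left_inv := fun
    | ⟨(xa i, xa j), _⟩ => rfl
    | ⟨(xa i, xb j), h⟩ => by
        have h' : i + j = j + R k * i := by
          have he := h.eq
          rw [xa_mul_xb, xb_mul_xa] at he
          exact xb.inj he
        have h2 : 2 ∣ i.val := (R_fix i).mp (by linear_combination -h')
        apply Subtype.ext
        show (xa (dbl (hlf i)), xb j) = (xa i, xb j)
        rw [dbl_hlf i h2]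
    | ⟨(xb i, xa j), h⟩ => by
        have h' : i + R k * j = j + i := by
          have he := h.eq
          rw [xb_mul_xa, xa_mul_xb] at he
          exact xb.inj he
        have h2 : 2 ∣ j.val := (R_fix j).mp (by linear_combination h')
        apply Subtype.ext
        show (xb i, xa (dbl (hlf j))) = (xb i, xa j)
        rw [dbl_hlf j h2]
    | ⟨(xb i, xb j), h⟩ => by
        have h' : i + R k * j = j + R k * i := by
          have he := h.eq
          rw [xb_mul_xb, xb_mul_xb] at he
          exact xa.inj he
        have h2 : 2 ∣ (j - i).val := (R_fix (j - i)).mp (by linear_combination h')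
        apply Subtype.ext
        show (xb i, xb (i + dbl (hlf (j - i)))) = (xb i, xb j)
        rw [dbl_hlf _ h2, add_sub_cancel]
  right_inv := fun
    | .inl (i, j) => rfl
    | .inr (.inl (j, c)) => by
        show Sum.inr (Sum.inl (j, hlf (dbl c))) = _
        rw [hlf_dbl]
    | .inr (.inr (.inl (i, c))) => by
        show Sum.inr (Sum.inr (Sum.inl (i, hlf (dbl c)))) = _
        rw [hlf_dbl]
    | .inr (.inr (.inr (i, c))) => by
        show Sum.inr (Sum.inr (Sum.inr (i, hlf (i + dbl c - i)))) = _
        rw [add_sub_cancel_left, hlf_dbl]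

/-- `Qc k` as a sum type. -/
def qcEquivSum (k : ℕ) : Qc k ≃ (ZMod (2 ^ (k + 2)) ⊕ ZMod (2 ^ (k + 2))) where
  toFun := fun | xa i => Sum.inl i | xb i => Sum.inr i
  invFun := fun | Sum.inl i => xa i | Sum.inr i => xb i
  left_inv := fun g => by cases g <;> rfl
  right_inv := fun s => by cases s <;> rfl

lemma card_qc (k : ℕ) : Nat.card (Qc k) = 2 ^ (k + 3) := by
  rw [Nat.card_congr (qcEquivSum k), Nat.card_sum, Nat.card_zmod]
  ring

lemma card_commute (k : ℕ) :
    Nat.card { p : Qc k × Qc k // Commute p.1 p.2 } = 5 * 2 ^ (2 * k + 3) := by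
  rw [Nat.card_congr (commuteEquiv k)]
  simp only [Nat.card_sum, Nat.card_prod, Nat.card_zmod]
  ring

lemma card_conjClasses_qc (k : ℕ) : Nat.card (ConjClasses (Qc k)) = 5 * 2 ^ k := by
  have h := card_comm_eq_card_conjClasses_mul_card (Qc k)
  rw [card_commute, card_qc] at h
  have h2 : 5 * 2 ^ (2 * k + 3) = 5 * 2 ^ k * 2 ^ (k + 3) := by ring
  rw [h2] at h
  exact (Nat.eq_of_mul_eq_mul_right (by positivity) h.symm)

end Qc

/-- Conjugacy classes are preserved by group isomorphisms. -/
def conjClassesCongr {G H : Type*} [Group G] [Group H] (e : G ≃* H) :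
    ConjClasses G ≃ ConjClasses H :=
  Quotient.congr e.toEquiv fun a b =>
    ⟨fun h => e.toMonoidHom.map_isConj h,
     fun h => by
      have h2 := e.symm.toMonoidHom.map_isConj h
      exact (by simpa using h2 : IsConj a b)⟩

end QAaux

/-- For `n ≥ 4`, the group `QA_n` has exactly `5 · 2^(n-3)` conjugacy classes. -/
theorem stmt6 (n : ℕ) (hn : 4 ≤ n) :
    Nat.card (ConjClasses (QA n)) = 5 * 2 ^ (n - 3) := by
  obtain ⟨k, rfl⟩ : ∃ k, n = k + 3 := ⟨n - 3, by omega⟩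
  rw [Nat.card_congr (QAaux.conjClassesCongr (QAaux.qaEquiv k)), QAaux.Qc.card_conjClasses_qc]
  have h : k + 3 - 3 = k := rfl
  rw [h]
end

section
/- Let n ≥ 4. For each odd integer u with 0 < u < 2^{n-1}, each a ∈ {0,1} and each v ∈ {0, 2^{n-2}}, the assignment x ↦ y^a x^u, y ↦ y x^v extends to an automorphism ψ_{u,a,v} of the quasi-abelian group QA_n; every automorphism of QA_n is of this form; these 2^n automorphisms are pairwise distinct; and consequently the automorphism group Aut(QA_n) has order 2^n. -/
set_option linter.unusedSectionVars false
set_option linter.dupNamespace false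

namespace QAux

abbrev R (n : ℕ) := ZMod (2 ^ (n - 1))

/-- second component ring element `2^(n-2)`. -/
def sC (n : ℕ) : R n := ((2 ^ (n - 2) : ℕ) : R n)
/-- `2^(n-3)`. -/
def mC (n : ℕ) : R n := ((2 ^ (n - 3) : ℕ) : R n)

def tau (n : ℕ) (b : ZMod 2) : R n := 1 + (b.val : R n) * sC n

lemma zmod2_cases (b : ZMod 2) : b = 0 ∨ b = 1 := by revert b; decide

section facts
variable (n : ℕ) [hn4 : Fact (4 ≤ n)]

lemma hn : 4 ≤ n := hn4.out

lemma two_s : sC n * 2 = 0 := by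
  have h4 := hn n
  have h : ((2 ^ (n - 2) * 2 : ℕ) : R n) = 0 := by
    rw [show 2 ^ (n - 2) * 2 = 2 ^ (n - 1) by rw [← pow_succ]; congr 1; omega]
    exact ZMod.natCast_self _
  calc sC n * 2 = ((2 ^ (n - 2) * 2 : ℕ) : R n) := by rw [sC]; push_cast; ring
    _ = 0 := h

lemma s_s : sC n * sC n = 0 := by
  have h4 := hn n
  rw [sC, ← Nat.cast_mul, ← pow_add, ZMod.natCast_eq_zero_iff]
  exact pow_dvd_pow 2 (by omega)

lemma two_m : (2 : R n) * mC n = sC n := by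
  have h4 := hn n
  have h : ((2 * 2 ^ (n - 3) : ℕ) : R n) = ((2 ^ (n - 2) : ℕ) : R n) := by
    congr 1; rw [← pow_succ']; congr 1; omega
  calc (2 : R n) * mC n = ((2 * 2 ^ (n - 3) : ℕ) : R n) := by rw [mC]; push_cast; ring
    _ = sC n := h

lemma m_s : mC n * sC n = 0 := by
  have h4 := hn n
  rw [sC, mC, ← Nat.cast_mul, ← pow_add, ZMod.natCast_eq_zero_iff]
  exact pow_dvd_pow 2 (by omega)

lemma tau_zero : tau n 0 = 1 := by simp [tau]

lemma tau_one : tau n 1 = 1 + sC n := by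
  have : (1 : ZMod 2).val = 1 := rfl
  simp [tau, this]

lemma tau_add (b c : ZMod 2) : tau n (b + c) = tau n b * tau n c := by
  rcases zmod2_cases b with rfl | rfl <;> rcases zmod2_cases c with rfl | rfl <;>
    simp [tau_zero, tau_one]
  have h : (1 + 1 : ZMod 2) = 0 := by decide
  rw [h, tau_zero]
  have h2 := two_s n
  have hss := s_s n
  linear_combination (-1 : R n) * h2 - hss

lemma tau_sq (b : ZMod 2) : tau n b * tau n b = 1 := by
  rw [← tau_add]
  rcases zmod2_cases b with rfl | rfl
  · simp [tau_zero]
  · have h : (1 + 1 : ZMod 2) = 0 := by decide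
    rw [h, tau_zero]

end facts

/-- The concrete model of `QA n`: pairs `(a, u)` representing `y^a x^u`. -/
@[ext] structure Mdl (n : ℕ) where
  a : ZMod 2
  u : R n

namespace Mdl

variable {n : ℕ} [Fact (4 ≤ n)]

instance : Mul (Mdl n) := ⟨fun p q => ⟨p.a + q.a, p.u * tau n q.a + q.u⟩⟩
instance : One (Mdl n) := ⟨⟨0, 0⟩⟩
instance : Inv (Mdl n) := ⟨fun p => ⟨p.a, -(p.u * tau n p.a)⟩⟩

@[simp] lemma mul_a (p q : Mdl n) : (p * q).a = p.a + q.a := rfl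
@[simp] lemma mul_u (p q : Mdl n) : (p * q).u = p.u * tau n q.a + q.u := rfl
@[simp] lemma one_a : (1 : Mdl n).a = 0 := rfl
@[simp] lemma one_u : (1 : Mdl n).u = 0 := rfl
@[simp] lemma inv_a (p : Mdl n) : (p⁻¹).a = p.a := rfl
@[simp] lemma inv_u (p : Mdl n) : (p⁻¹).u = -(p.u * tau n p.a) := rfl

lemma add_self (b : ZMod 2) : b + b = 0 := by
  rcases zmod2_cases b with rfl | rfl <;> decide

instance : Group (Mdl n) where
  mul_assoc p q r := by
    ext
    · simp [add_assoc]
    · simp [tau_add]; ring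
  one_mul p := by ext <;> simp
  mul_one p := by ext <;> simp [tau_zero]
  inv_mul_cancel p := by
    ext
    · simp [add_self]
    · simp only [mul_a, mul_u, inv_a, inv_u, one_a, one_u, add_self]
      linear_combination (-p.u) * tau_sq n p.a

end Mdl




variable {n : ℕ} [Fact (4 ≤ n)]

def X0 : Mdl n := ⟨0, 1⟩
def Y0 : Mdl n := ⟨1, 0⟩

lemma xw_pow (w : R n) (k : ℕ) : (⟨0, w⟩ : Mdl n) ^ k = ⟨0, (k : R n) * w⟩ := by
  induction k with
  | zero => ext <;> simp
  | succ k ih =>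
    rw [pow_succ, ih]
    ext
    · simp
    · simp [tau_zero]; push_cast; ring

lemma y_pow (k : ℕ) : (Y0 : Mdl n) ^ k = ⟨(k : ZMod 2), 0⟩ := by
  induction k with
  | zero => ext <;> simp
  | succ k ih =>
    rw [pow_succ, ih]
    ext
    · simp [Y0]
    · simp [Y0]

lemma sq_formula (p : Mdl n) : p ^ 2 = ⟨0, p.u * (tau n p.a + 1)⟩ := by
  rw [pow_two]
  ext
  · simp [Mdl.add_self]
  · simp; ring

lemma pow_2n1 (p : Mdl n) : p ^ (2 ^ (n - 1)) = 1 := by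
  have h4 := hn n
  have he : 2 ^ (n - 1) = 2 * 2 ^ (n - 2) := by
    rw [← pow_succ']; congr 1; omega
  rw [he, pow_mul, sq_formula, xw_pow]
  have hc : ((2 ^ (n - 2) : ℕ) : R n) = sC n := rfl
  ext
  · simp
  · simp only [Mdl.one_u, hc]
    have h2 := two_s n
    have hss := s_s n
    rcases zmod2_cases p.a with h | h
    · rw [h, tau_zero]; linear_combination (p.u : R n) * h2
    · rw [h, tau_one]; linear_combination (p.u : R n) * h2 + p.u * hss

lemma pow_t (p : Mdl n) : p ^ (2 ^ (n - 2) + 1) = ⟨p.a, p.u * (1 + sC n)⟩ := by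
  have h4 := hn n
  have he : 2 ^ (n - 2) + 1 = 2 * 2 ^ (n - 3) + 1 := by
    rw [← pow_succ']; congr 2; omega
  rw [he, pow_succ, pow_mul, sq_formula, xw_pow]
  have hc : ((2 ^ (n - 3) : ℕ) : R n) = mC n := rfl
  ext
  · simp
  · simp only [Mdl.mul_u, hc]
    have hms := m_s n
    have h2m := two_m n
    rcases zmod2_cases p.a with h | h
    · rw [h, tau_zero]; linear_combination p.u * h2m
    · rw [h, tau_one]; linear_combination p.u * h2m + (3 * p.u + p.u * sC n) * hms

lemma conj_formula (p : Mdl n) (w : R n) (hw : w * sC n = 0) :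
    (⟨1, w⟩ : Mdl n) * p * (⟨1, w⟩ : Mdl n)⁻¹ = ⟨p.a, p.u * (1 + sC n)⟩ := by
  ext
  · simp only [Mdl.mul_a, Mdl.inv_a]
    rcases zmod2_cases p.a with h | h <;> rw [h] <;> decide
  · simp only [Mdl.mul_u, Mdl.mul_a, Mdl.inv_u, Mdl.inv_a, tau_one]
    rcases zmod2_cases p.a with h | h
    · rw [h, tau_zero]; ring
    · rw [h, tau_one]; linear_combination (1 + sC n) * hw

lemma central_conj (p : Mdl n) (w : R n) (hw : w * sC n = 0) :
    (⟨0, w⟩ : Mdl n) * p * (⟨0, w⟩ : Mdl n)⁻¹ = p := by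
  ext
  · simp
  · simp only [Mdl.mul_u, Mdl.mul_a, Mdl.inv_u, Mdl.inv_a, tau_zero]
    rcases zmod2_cases p.a with h | h
    · rw [h, tau_zero]; ring
    · rw [h, tau_one]; linear_combination hw

variable {n : ℕ} [Fact (4 ≤ n)]

def f0 : Bool → Mdl n := fun b => bif b then X0 else Y0

lemma rels_check : ∀ r ∈ qaRels n, FreeGroup.lift (f0 (n := n)) r = 1 := by
  intro r hr
  have hx : FreeGroup.lift (f0 (n := n)) (FreeGroup.of true) = X0 := FreeGroup.lift_apply_of
  have hy : FreeGroup.lift (f0 (n := n)) (FreeGroup.of false) = Y0 := FreeGroup.lift_apply_of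
  rcases hr with h | h | h
  · rw [h, map_pow, hx, pow_2n1]
  · rw [h, map_pow, hy, sq_formula]
    ext <;> simp [Y0]
  · rw [Set.mem_singleton_iff] at h
    rw [h]
    simp only [map_mul, map_inv, map_pow, hx, hy]
    rw [mul_inv_eq_one]
    have h1 : (Y0 : Mdl n) * X0 * Y0⁻¹ = ⟨(X0 : Mdl n).a, (X0 : Mdl n).u * (1 + sC n)⟩ := by
      have := conj_formula (n := n) X0 0 (by ring)
      simpa [Y0] using this
    rw [h1, pow_t]

/-- The homomorphism from `QA n` to the concrete model. -/
def Fh : QA n →* Mdl n := PresentedGroup.toGroup rels_check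

@[simp] lemma Fh_x : Fh (qx n) = (X0 : Mdl n) := PresentedGroup.toGroup.of rels_check

@[simp] lemma Fh_y : Fh (qy n) = (Y0 : Mdl n) := PresentedGroup.toGroup.of rels_check

lemma Fh_yx (a u : ℕ) :
    Fh (qy n ^ a * qx n ^ u) = (⟨(a : ZMod 2), (u : R n)⟩ : Mdl n) := by
  rw [map_mul, map_pow, map_pow, Fh_x, Fh_y, y_pow]
  have : (X0 : Mdl n) ^ u = ⟨0, (u : R n)⟩ := by
    rw [show (X0 : Mdl n) = ⟨0, 1⟩ from rfl, xw_pow, mul_one]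
  rw [this]
  ext <;> simp [tau_zero]

-- relations in QA n
lemma rel_one {r : FreeGroup Bool} (h : r ∈ qaRels n) :
    PresentedGroup.mk (qaRels n) r = 1 :=
  (QuotientGroup.eq_one_iff r).mpr (Subgroup.subset_normalClosure h)

lemma qx_rel : qx n ^ 2 ^ (n - 1) = 1 := by
  have := rel_one (n := n) (Or.inl rfl)
  rwa [map_pow] at this

lemma qy_rel : qy n ^ 2 = 1 := by
  have := rel_one (n := n) (Or.inr (Or.inl rfl))
  rwa [map_pow] at this

lemma qy_inv : (qy n)⁻¹ = qy n := by
  have h : qy n * qy n = 1 := by rw [← pow_two]; exact qy_rel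
  exact inv_eq_of_mul_eq_one_right h

lemma conj_rel : qy n * qx n * (qy n)⁻¹ = qx n ^ (2 ^ (n - 2) + 1) := by
  have := rel_one (n := n) (Or.inr (Or.inr rfl))
  simp only [map_mul, map_inv, map_pow] at this
  rw [mul_inv_eq_one] at this
  exact this

lemma qy_sq : qy n * qy n = 1 := by rw [← pow_two]; exact qy_rel

lemma swap_one (w : ℕ) :
    qx n ^ w * qy n = qy n * qx n ^ (w * (2 ^ (n - 2) + 1)) := by
  have h : qy n * qx n ^ (w * (2 ^ (n - 2) + 1)) = qx n ^ w * qy n := by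
    rw [mul_comm w, pow_mul, ← conj_rel, conj_pow, qy_inv,
      ← mul_assoc, ← mul_assoc, qy_sq, one_mul]
  exact h.symm

lemma swap_pow (w b : ℕ) :
    qx n ^ w * qy n ^ b = qy n ^ b * qx n ^ (w * (2 ^ (n - 2) + 1) ^ b) := by
  induction b with
  | zero => simp
  | succ b ih =>
    have he : w * (2 ^ (n - 2) + 1) ^ b * (2 ^ (n - 2) + 1) =
        w * (2 ^ (n - 2) + 1) ^ (b + 1) := by ring
    rw [pow_succ, ← mul_assoc, ih, mul_assoc, swap_one, he, ← mul_assoc]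

lemma yx_mul (a u b v : ℕ) :
    (qy n ^ a * qx n ^ u) * (qy n ^ b * qx n ^ v) =
      qy n ^ (a + b) * qx n ^ (u * (2 ^ (n - 2) + 1) ^ b + v) := by
  calc (qy n ^ a * qx n ^ u) * (qy n ^ b * qx n ^ v)
      = qy n ^ a * (qx n ^ u * qy n ^ b) * qx n ^ v := by group
    _ = qy n ^ a * (qy n ^ b * qx n ^ (u * (2 ^ (n - 2) + 1) ^ b)) * qx n ^ v := by
        rw [swap_pow]
    _ = qy n ^ (a + b) * qx n ^ (u * (2 ^ (n - 2) + 1) ^ b + v) := by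
        rw [pow_add, pow_add]; group


lemma qx_pow_congr {k l : ℕ} (h : (k : R n) = (l : R n)) : qx n ^ k = qx n ^ l := by
  have hmod : k ≡ l [MOD 2 ^ (n - 1)] := (ZMod.natCast_eq_natCast_iff _ _ _).mp h
  have hdvd : orderOf (qx n) ∣ 2 ^ (n - 1) := orderOf_dvd_of_pow_eq_one qx_rel
  exact pow_eq_pow_iff_modEq.mpr (hmod.of_dvd hdvd)

lemma qy_pow_congr {k l : ℕ} (h : (k : ZMod 2) = (l : ZMod 2)) : qy n ^ k = qy n ^ l := by
  have hmod : k ≡ l [MOD 2] := (ZMod.natCast_eq_natCast_iff _ _ _).mp h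
  have hdvd : orderOf (qy n) ∣ 2 := orderOf_dvd_of_pow_eq_one qy_rel
  exact pow_eq_pow_iff_modEq.mpr (hmod.of_dvd hdvd)

/-- Every element of `QA n` has the form `y^a x^u`. -/
lemma exists_rep (g : QA n) : ∃ a u : ℕ, g = qy n ^ a * qx n ^ u := by
  let S : Subgroup (QA n) :=
    { carrier := {g | ∃ a u : ℕ, g = qy n ^ a * qx n ^ u}
      one_mem' := ⟨0, 0, by simp⟩
      mul_mem' := by
        rintro _ _ ⟨a, u, rfl⟩ ⟨b, v, rfl⟩
        exact ⟨a + b, u * (2 ^ (n - 2) + 1) ^ b + v, yx_mul a u b v⟩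
      inv_mem' := by
        rintro _ ⟨a, u, rfl⟩
        refine ⟨a, u * (2 ^ (n - 2) + 1) ^ a * (2 ^ (n - 1) - 1), ?_⟩
        have hprod : (qy n ^ a * qx n ^ u) *
            (qy n ^ a * qx n ^ (u * (2 ^ (n - 2) + 1) ^ a * (2 ^ (n - 1) - 1))) = 1 := by
          rw [yx_mul]
          have h1 : qy n ^ (a + a) = 1 := by
            rw [show a + a = 2 * a by ring, pow_mul, qy_rel, one_pow]
          have h2 : qx n ^ (u * (2 ^ (n - 2) + 1) ^ a +
              u * (2 ^ (n - 2) + 1) ^ a * (2 ^ (n - 1) - 1)) = 1 := by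
            have he : u * (2 ^ (n - 2) + 1) ^ a +
                u * (2 ^ (n - 2) + 1) ^ a * (2 ^ (n - 1) - 1) =
                u * (2 ^ (n - 2) + 1) ^ a * 2 ^ (n - 1) := by
              have : (1 : ℕ) ≤ 2 ^ (n - 1) := Nat.one_le_two_pow
              cases Nat.exists_eq_add_of_le this with
              | intro c hc =>
                rw [hc, show 1 + c - 1 = c from by omega]; ring
            rw [he, mul_comm, pow_mul, qx_rel, one_pow]
          rw [h1, h2, one_mul]
        exact inv_eq_of_mul_eq_one_right hprod
      }
  have hgen : ∀ j : Bool, PresentedGroup.of j ∈ S := by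
    intro j
    cases j
    · exact ⟨1, 0, by simp [qy]⟩
    · exact ⟨0, 1, by simp [qx]⟩
  exact PresentedGroup.generated_by (qaRels n) S hgen g


instance neZeroPow : NeZero ((2 : ℕ) ^ (n - 1)) := ⟨(pow_pos (by norm_num : (0:ℕ) < 2) _).ne'⟩

lemma Fh_inj : Function.Injective (Fh (n := n)) := by
  intro g h e
  obtain ⟨a, u, rfl⟩ := exists_rep g
  obtain ⟨b, v, rfl⟩ := exists_rep h
  rw [Fh_yx, Fh_yx] at e
  have ha : ((a : ZMod 2)) = (b : ZMod 2) := congrArg Mdl.a e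
  have hu : ((u : R n)) = (v : R n) := congrArg Mdl.u e
  rw [qy_pow_congr ha, qx_pow_congr hu]

lemma Fh_rep (p : Mdl n) : Fh (qy n ^ p.a.val * qx n ^ p.u.val) = p := by
  rw [Fh_yx]
  ext
  · exact ZMod.natCast_rightInverse p.a
  · exact ZMod.natCast_rightInverse p.u

lemma Fh_surj : Function.Surjective (Fh (n := n)) :=
  fun p => ⟨qy n ^ p.a.val * qx n ^ p.u.val, Fh_rep p⟩

instance : Finite (Mdl n) := by
  have : Function.Surjective (fun q : ZMod 2 × R n => (⟨q.1, q.2⟩ : Mdl n)) :=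
    fun p => ⟨(p.a, p.u), rfl⟩
  exact Finite.of_surjective _ this

instance : Finite (QA n) := Finite.of_injective _ (Fh_inj (n := n))


lemma Fh_yxv (v : ℕ) : Fh (qy n * qx n ^ v) = (⟨1, (v : R n)⟩ : Mdl n) := by
  rw [← pow_one (qy n), Fh_yx, Nat.cast_one]

lemma vbar_s {v : ℕ} (hv : v = 0 ∨ v = 2 ^ (n - 2)) : (v : R n) * sC n = 0 := by
  rcases hv with rfl | rfl
  · simp
  · exact s_s n

lemma vbar_rel {v : ℕ} (hv : v = 0 ∨ v = 2 ^ (n - 2)) :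
    (v : R n) * (1 + sC n + 1) = 0 := by
  rcases hv with rfl | rfl
  · simp
  · have h2 := two_s n
    have hss := s_s n
    show sC n * (1 + sC n + 1) = 0
    linear_combination h2 + hss

section part1
variable (u a v : ℕ)

/-- the designated images of the generators. -/
def gmap : Bool → QA n := fun b => bif b then qy n ^ a * qx n ^ u else qy n * qx n ^ v

lemma gmap_check (hv : v = 0 ∨ v = 2 ^ (n - 2)) :
    ∀ r ∈ qaRels n, FreeGroup.lift (gmap (n := n) u a v) r = 1 := by
  intro r hr
  have hx : FreeGroup.lift (gmap (n := n) u a v) (FreeGroup.of true)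
      = qy n ^ a * qx n ^ u := FreeGroup.lift_apply_of
  have hy : FreeGroup.lift (gmap (n := n) u a v) (FreeGroup.of false)
      = qy n * qx n ^ v := FreeGroup.lift_apply_of
  rcases hr with h | h | h
  · rw [h, map_pow, hx]
    apply Fh_inj
    rw [map_pow, Fh_yx, map_one, pow_2n1]
  · rw [h, map_pow, hy]
    apply Fh_inj
    rw [map_pow, Fh_yxv, map_one, sq_formula]
    ext
    · simp
    · show (v : R n) * (tau n 1 + 1) = 0
      rw [tau_one]
      exact vbar_rel hv
  · rw [Set.mem_singleton_iff] at h
    rw [h]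
    simp only [map_mul, map_inv, map_pow, hx, hy]
    rw [mul_inv_eq_one]
    apply Fh_inj
    rw [map_mul, map_mul, map_inv, map_pow, Fh_yxv, Fh_yx]
    rw [conj_formula _ _ (vbar_s hv), pow_t]

/-- The endomorphism of `QA n` determined by the parameters. -/
def phi (hv : v = 0 ∨ v = 2 ^ (n - 2)) : QA n →* QA n :=
  PresentedGroup.toGroup (gmap_check u a v hv)

lemma phi_x (hv : v = 0 ∨ v = 2 ^ (n - 2)) :
    phi u a v hv (qx n) = qy n ^ a * qx n ^ u :=
  PresentedGroup.toGroup.of (gmap_check u a v hv)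

lemma phi_y (hv : v = 0 ∨ v = 2 ^ (n - 2)) :
    phi u a v hv (qy n) = qy n * qx n ^ v :=
  PresentedGroup.toGroup.of (gmap_check u a v hv)

lemma phi_surj (hu : Odd u) (hu2 : u < 2 ^ (n - 1)) (ha : a ≤ 1)
    (hv : v = 0 ∨ v = 2 ^ (n - 2)) : Function.Surjective (phi u a v hv) := by
  have h4 := hn n
  set φ := phi u a v hv with hφ
  have hXmem : qy n ^ a * qx n ^ u ∈ φ.range := ⟨qx n, phi_x u a v hv⟩
  have hYmem : qy n * qx n ^ v ∈ φ.range := ⟨qy n, phi_y u a v hv⟩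
  -- the element D = (Y^a)⁻¹ * X, whose image in the model is ⟨0, w⟩ with w odd
  have hvle : a * v ≤ 2 ^ (n - 1) := by
    rcases hv with rfl | rfl
    · simp
    · rcases Nat.le_one_iff_eq_zero_or_eq_one.mp ha with rfl | rfl
      · simp [Nat.one_le_two_pow]
      · simpa using (Nat.pow_le_pow_right (by norm_num) (by omega) : 2^(n-2) ≤ 2^(n-1))
  set w : ℕ := u + (2 ^ (n - 1) - a * v) with hw
  have hwodd : Odd w := by
    have hveven : Even (a * v) := by
      rcases hv with rfl | rfl
      · simp
      · rcases Nat.le_one_iff_eq_zero_or_eq_one.mp ha with rfl | rfl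
        · simp
        · simpa using (Nat.even_pow.mpr ⟨even_two, by omega⟩ : Even (2 ^ (n-2)))
    have h2even : Even (2 ^ (n - 1) : ℕ) := Nat.even_pow.mpr ⟨even_two, by omega⟩
    rcases hu with ⟨c, hc⟩
    rcases hveven with ⟨d, hd⟩
    rcases h2even with ⟨e, he⟩
    exact ⟨c + e - d, by omega⟩
  have hwcast : (w : R n) = (u : R n) - ((a : R n) * (v : R n)) := by
    have hsum : (2 ^ (n - 1) - a * v) + a * v = 2 ^ (n - 1) := by omega
    have h0 : (((2 ^ (n - 1) - a * v) + a * v : ℕ) : R n) = 0 := by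
      rw [hsum]; exact ZMod.natCast_self _
    push_cast at h0
    have h1 : ((2 ^ (n - 1) - a * v : ℕ) : R n) = -((a : R n) * (v : R n)) :=
      eq_neg_of_add_eq_zero_left h0
    rw [hw]
    push_cast [h1]
    ring
  have hDmem : ((qy n * qx n ^ v) ^ a)⁻¹ * (qy n ^ a * qx n ^ u) ∈ φ.range :=
    mul_mem (inv_mem (pow_mem hYmem a)) hXmem
  have hFD : Fh (((qy n * qx n ^ v) ^ a)⁻¹ * (qy n ^ a * qx n ^ u))
      = (⟨0, (w : R n)⟩ : Mdl n) := by
    rw [map_mul, map_inv, map_pow, Fh_yxv, Fh_yx]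
    rcases Nat.le_one_iff_eq_zero_or_eq_one.mp ha with rfl | rfl
    · ext
      · simp
      · simp only [hwcast, pow_zero, inv_one, one_mul, Mdl.mul_u, Nat.cast_zero]
        ring
    · rw [pow_one]
      ext
      · simp only [Mdl.mul_a, Mdl.inv_a, Nat.cast_one]
        decide
      · simp only [Mdl.mul_u, Mdl.mul_a, Mdl.inv_u, Mdl.inv_a, Nat.cast_one, hwcast]
        linear_combination (-(v : R n)) * tau_sq n 1
  have hqx : qx n ∈ φ.range := by
    have hwunit : IsUnit (w : R n) := by
      rw [ZMod.isUnit_iff_coprime]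
      exact Nat.Coprime.pow_right _ (Nat.coprime_two_right.mpr hwodd)
    obtain ⟨ω, hω⟩ := hwunit
    set k : ℕ := ((ω⁻¹ : (R n)ˣ) : R n).val with hkdef
    have hk : (k : R n) * (w : R n) = 1 := by
      rw [hkdef, ZMod.natCast_val, ZMod.cast_id, ← hω]
      exact ω.inv_mul
    have hDk : (((qy n * qx n ^ v) ^ a)⁻¹ * (qy n ^ a * qx n ^ u)) ^ k = qx n := by
      apply Fh_inj
      rw [map_pow, hFD, Fh_x, xw_pow]
      ext
      · rfl
      · exact hk
    exact hDk ▸ pow_mem hDmem k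
  have hqy : qy n ∈ φ.range := by
    have hmem : (qy n * qx n ^ v) * (qx n ^ v)⁻¹ ∈ φ.range :=
      mul_mem hYmem (inv_mem (pow_mem hqx v))
    simpa using hmem
  intro g
  have : g ∈ φ.range := by
    apply PresentedGroup.generated_by (qaRels n) φ.range
    intro j
    cases j
    · exact hqy
    · exact hqx
  exact this

lemma part1 (hu : Odd u) (hu2 : u < 2 ^ (n - 1)) (ha : a ≤ 1)
    (hv : v = 0 ∨ v = 2 ^ (n - 2)) :
    ∃! ψ : MulAut (QA n), ψ (qx n) = qy n ^ a * qx n ^ u ∧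
      ψ (qy n) = qy n * qx n ^ v := by
  have hsurj := phi_surj u a v hu hu2 ha hv
  have hbij : Function.Bijective (phi u a v hv) :=
    ⟨Finite.injective_iff_surjective.mpr hsurj, hsurj⟩
  refine ⟨MulEquiv.ofBijective _ hbij, ⟨phi_x u a v hv, phi_y u a v hv⟩, ?_⟩
  rintro ψ ⟨h1, h2⟩
  apply MulEquiv.toMonoidHom_injective
  apply PresentedGroup.ext
  intro b
  cases b
  · show ψ (qy n) = phi u a v hv (qy n)
    rw [h2, phi_y]
  · show ψ (qx n) = phi u a v hv (qx n)
    rw [h1, phi_x]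

end part1


lemma pow_half_even (p : Mdl n) (z : R n) (hz : p.u = z * 2) :
    p ^ (2 ^ (n - 2)) = 1 := by
  have h4 := hn n
  have he : 2 ^ (n - 2) = 2 * 2 ^ (n - 3) := by rw [← pow_succ']; congr 1; omega
  rw [he, pow_mul, sq_formula, xw_pow]
  have hc : ((2 ^ (n - 3) : ℕ) : R n) = mC n := rfl
  ext
  · simp
  · simp only [Mdl.one_u, hc]
    have h2 := two_s n
    have hss := s_s n
    have h2m := two_m n
    rcases zmod2_cases p.a with h | h
    · rw [h, tau_zero, hz]
      linear_combination (2 * z : R n) * h2m + z * h2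
    · rw [h, tau_one, hz]
      linear_combination ((2 + sC n) * z : R n) * h2m + z * h2 + z * hss

lemma one_add_m_unit : IsUnit (1 + mC n) := by
  have h4 := hn n
  have hcast : ((1 + 2 ^ (n - 3) : ℕ) : R n) = 1 + mC n := by
    rw [mC]; push_cast; ring
  rw [← hcast, ZMod.isUnit_iff_coprime]
  apply Nat.Coprime.pow_right
  rw [Nat.coprime_two_right]
  exact (Nat.even_pow.mpr ⟨even_two, by omega⟩).one_add

lemma qxs_ne_one : qx n ^ (2 ^ (n - 2)) ≠ 1 := by
  have h4 := hn n
  intro h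
  have h2 := congrArg Fh h
  rw [map_pow, map_one, Fh_x] at h2
  have h3 : (X0 : Mdl n) ^ (2 ^ (n - 2)) = ⟨0, ((2 ^ (n - 2) : ℕ) : R n)⟩ := by
    rw [show (X0 : Mdl n) = ⟨0, 1⟩ from rfl, xw_pow, mul_one]
  rw [h3] at h2
  have h5 : ((2 ^ (n - 2) : ℕ) : R n) = 0 := congrArg Mdl.u h2
  rw [ZMod.natCast_eq_zero_iff] at h5
  have := Nat.le_of_dvd (pow_pos (by norm_num) _) h5
  have : (2 : ℕ) ^ (n - 2) < 2 ^ (n - 1) := Nat.pow_lt_pow_right (by norm_num) (by omega)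
  omega

lemma part2 (ψ : MulAut (QA n)) :
    ∃ u a v : ℕ, Odd u ∧ u < 2 ^ (n - 1) ∧ a ≤ 1 ∧ (v = 0 ∨ v = 2 ^ (n - 2)) ∧
      ψ (qx n) = qy n ^ a * qx n ^ u ∧ ψ (qy n) = qy n * qx n ^ v := by
  have h4 := hn n
  set X := ψ (qx n) with hX
  set Y := ψ (qy n) with hY
  set p := Fh X with hp
  set q := Fh Y with hq
  -- the image of y squares to 1
  have hYsq : Y ^ 2 = 1 := by rw [hY, ← map_pow, qy_rel, map_one]
  have hqsq : q ^ 2 = 1 := by rw [hq, ← map_pow, hYsq, map_one]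
  -- x has nontrivial 2^(n-2) power, and so does X
  have hXs : X ^ (2 ^ (n - 2)) ≠ 1 := by
    intro h
    rw [hX, ← map_pow] at h
    exact qxs_ne_one (ψ.injective (by rw [h, map_one]))
  -- the first component of q is 1
  have hqa : q.a = 1 := by
    rcases zmod2_cases q.a with h | h
    swap
    · exact h
    exfalso
    have hqe : q = ⟨0, q.u⟩ := by ext; exacts [h, rfl]
    have hq2 : q.u * 2 = 0 := by
      have := congrArg Mdl.u (sq_formula q ▸ hqsq)
      simp only [Mdl.one_u] at this
      rw [h, tau_zero] at this
      linear_combination this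
    have hqs : q.u * sC n = 0 := by
      rw [← two_m]
      linear_combination (mC n) * hq2
    -- Y is central, contradiction with the conjugation relation
    have hconjX : Y * X * Y⁻¹ = X ^ (2 ^ (n - 2) + 1) := by
      have := congrArg ψ (conj_rel (n := n))
      simpa only [map_mul, map_inv, map_pow, ← hX, ← hY] using this
    have hFconj : Fh (Y * X * Y⁻¹) = Fh X := by
      rw [map_mul, map_mul, map_inv, ← hp, ← hq, hqe]
      exact central_conj p q.u hqs
    have hXt : X ^ (2 ^ (n - 2) + 1) = X := by
      rw [← hconjX]
      exact Fh_inj hFconj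
    have hxt : qx n ^ (2 ^ (n - 2) + 1) = qx n := by
      apply ψ.injective
      rw [map_pow, ← hX, hXt]
    rw [pow_add, pow_one] at hxt
    have h1 : qx n ^ 2 ^ (n - 2) * qx n = 1 * qx n := by rw [hxt, one_mul]
    exact qxs_ne_one (mul_right_cancel h1)
  -- u is odd
  have hodd : Odd p.u.val := by
    by_contra heven
    rw [Nat.not_odd_iff_even] at heven
    obtain ⟨z, hz⟩ := heven
    have hpu : p.u = ((z : ℕ) : R n) * 2 := by
      have h1 : ((p.u.val : ℕ) : R n) = p.u := ZMod.natCast_rightInverse p.u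
      rw [← h1, hz]
      push_cast
      ring
    have hXpow : X ^ (2 ^ (n - 2)) = 1 := by
      apply Fh_inj
      rw [map_pow, map_one, ← hp]
      exact pow_half_even p _ hpu
    exact hXs hXpow
  -- v is 0 or 2^(n-2)
  have hv : q.u.val = 0 ∨ q.u.val = 2 ^ (n - 2) := by
    have hq2 : q.u * (2 + sC n) = 0 := by
      have := congrArg Mdl.u (sq_formula q ▸ hqsq)
      simp only [Mdl.one_u] at this
      rw [hqa, tau_one] at this
      linear_combination this
    have hfact : q.u * (2 + sC n) = (q.u * 2) * (1 + mC n) := by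
      have h2m := two_m n
      linear_combination (-q.u) * h2m
    have hq2' : q.u * 2 = 0 := by
      apply (one_add_m_unit (n := n)).mul_right_cancel
      rw [← hfact, hq2, zero_mul]
    have hcast : ((q.u.val * 2 : ℕ) : R n) = 0 := by
      have h1 : ((q.u.val : ℕ) : R n) = q.u := ZMod.natCast_rightInverse q.u
      push_cast
      rw [h1]
      exact hq2'
    rw [ZMod.natCast_eq_zero_iff] at hcast
    obtain ⟨c, hc⟩ := hcast
    have hA : q.u.val = 2 ^ (n - 2) * c := by
      apply Nat.eq_of_mul_eq_mul_right (show 0 < 2 by norm_num)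
      rw [hc]
      rw [show (2:ℕ) ^ (n - 1) = 2 ^ (n - 2) * 2 from by rw [← pow_succ]; congr 1; omega]
      ring
    have hlt := ZMod.val_lt q.u
    have hn2 : (2:ℕ) ^ (n - 1) = 2 ^ (n - 2) * 2 := by rw [← pow_succ]; congr 1; omega
    have hclt : c < 2 := by
      by_contra hge
      push_neg at hge
      have : 2 ^ (n - 2) * 2 ≤ 2 ^ (n - 2) * c := Nat.mul_le_mul_left _ hge
      omega
    interval_cases c
    · left; omega
    · right; omega
  refine ⟨p.u.val, p.a.val, q.u.val, hodd, ZMod.val_lt p.u, ?_, hv, ?_, ?_⟩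
  · have := ZMod.val_lt p.a
    omega
  · apply Fh_inj
    rw [Fh_rep, hp]
  · apply Fh_inj
    rw [Fh_yxv, ← hq]
    ext
    · exact hqa
    · exact (ZMod.natCast_rightInverse q.u).symm


instance neZeroPow2 : NeZero ((2 : ℕ) ^ (n - 2)) := ⟨(pow_pos (by norm_num : (0:ℕ) < 2) _).ne'⟩

lemma cast_inj_lt {k l : ℕ} (hk : k < 2 ^ (n - 1)) (hl : l < 2 ^ (n - 1))
    (h : (k : R n) = (l : R n)) : k = l := by
  have hm := (ZMod.natCast_eq_natCast_iff _ _ _).mp h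
  rwa [Nat.ModEq, Nat.mod_eq_of_lt hk, Nat.mod_eq_of_lt hl] at hm

lemma cast2_inj_le {k l : ℕ} (hk : k ≤ 1) (hl : l ≤ 1)
    (h : (k : ZMod 2) = (l : ZMod 2)) : k = l := by
  have hm := (ZMod.natCast_eq_natCast_iff _ _ _).mp h
  rwa [Nat.ModEq, Nat.mod_eq_of_lt (by omega), Nat.mod_eq_of_lt (by omega)] at hm

lemma part3 (u a v u' a' v' : ℕ) (hu2 : u < 2 ^ (n - 1)) (ha : a ≤ 1)
    (hv : v = 0 ∨ v = 2 ^ (n - 2)) (hu2' : u' < 2 ^ (n - 1)) (ha' : a' ≤ 1)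
    (hv' : v' = 0 ∨ v' = 2 ^ (n - 2))
    (e1 : qy n ^ a * qx n ^ u = qy n ^ a' * qx n ^ u')
    (e2 : qy n * qx n ^ v = qy n * qx n ^ v') :
    u = u' ∧ a = a' ∧ v = v' := by
  have h4 := hn n
  have hlt : (2:ℕ) ^ (n - 2) < 2 ^ (n - 1) := Nat.pow_lt_pow_right (by norm_num) (by omega)
  have f1 := congrArg Fh e1
  rw [Fh_yx, Fh_yx] at f1
  have f2 := congrArg Fh e2
  rw [Fh_yxv, Fh_yxv] at f2
  refine ⟨cast_inj_lt hu2 hu2' (congrArg Mdl.u f1),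
    cast2_inj_le ha ha' (congrArg Mdl.a f1),
    cast_inj_lt ?_ ?_ (congrArg Mdl.u f2)⟩
  · rcases hv with rfl | rfl
    · exact pow_pos (by norm_num) _
    · exact hlt
  · rcases hv' with rfl | rfl
    · exact pow_pos (by norm_num) _
    · exact hlt

section part4

lemma par_odd (k : ZMod (2 ^ (n - 2))) : Odd (2 * k.val + 1) := ⟨k.val, rfl⟩

lemma par_lt (k : ZMod (2 ^ (n - 2))) : 2 * k.val + 1 < 2 ^ (n - 1) := by
  have h4 := hn n
  have := ZMod.val_lt k
  have hn2 : (2:ℕ) ^ (n - 1) = 2 ^ (n - 2) * 2 := by rw [← pow_succ]; congr 1; omega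
  omega

lemma par_le (a : ZMod 2) : a.val ≤ 1 := by have := ZMod.val_lt a; omega

lemma par_v (b : ZMod 2) : b.val * 2 ^ (n - 2) = 0 ∨ b.val * 2 ^ (n - 2) = 2 ^ (n - 2) := by
  rcases zmod2_cases b with rfl | rfl
  · left; simp
  · right; simp [ZMod.val_one]

/-- The parametrization of the automorphism group. -/
noncomputable def toAut (t : ZMod (2 ^ (n - 2)) × ZMod 2 × ZMod 2) : MulAut (QA n) :=
  (part1 (2 * t.1.val + 1) t.2.1.val (t.2.2.val * 2 ^ (n - 2)) (par_odd t.1)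
    (par_lt t.1) (par_le t.2.1) (par_v t.2.2)).exists.choose

lemma toAut_spec (t : ZMod (2 ^ (n - 2)) × ZMod 2 × ZMod 2) :
    toAut t (qx n) = qy n ^ t.2.1.val * qx n ^ (2 * t.1.val + 1) ∧
      toAut t (qy n) = qy n * qx n ^ (t.2.2.val * 2 ^ (n - 2)) :=
  (part1 (2 * t.1.val + 1) t.2.1.val (t.2.2.val * 2 ^ (n - 2)) (par_odd t.1)
    (par_lt t.1) (par_le t.2.1) (par_v t.2.2)).exists.choose_spec

lemma toAut_bij : Function.Bijective (toAut (n := n)) := by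
  have h4 := hn n
  constructor
  · intro t t' he
    obtain ⟨h1, h2⟩ := toAut_spec t
    obtain ⟨h1', h2'⟩ := toAut_spec t'
    rw [he] at h1 h2
    obtain ⟨eu, ea, ev⟩ := part3 _ _ _ _ _ _ (par_lt t.1) (par_le t.2.1) (par_v t.2.2)
      (par_lt t'.1) (par_le t'.2.1) (par_v t'.2.2) (h1.symm.trans h1') (h2.symm.trans h2')
    have e1 : t.1 = t'.1 := ZMod.val_injective _ (by omega)
    have e2 : t.2.1 = t'.2.1 := ZMod.val_injective _ ea
    have e3 : t.2.2 = t'.2.2 := ZMod.val_injective _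
      (Nat.eq_of_mul_eq_mul_right (pow_pos (by norm_num) _) ev)
    exact Prod.ext e1 (Prod.ext e2 e3)
  · intro ψ
    obtain ⟨u, a, v, hu, hu2, ha, hv, hψx, hψy⟩ := part2 ψ
    obtain ⟨k0, hk0⟩ := hu
    have hn2 : (2:ℕ) ^ (n - 1) = 2 ^ (n - 2) * 2 := by rw [← pow_succ]; congr 1; omega
    have hk0lt : k0 < 2 ^ (n - 2) := by omega
    set b0 : ℕ := if v = 0 then 0 else 1 with hb0
    have hb0le : b0 ≤ 1 := by rw [hb0]; split <;> norm_num
    refine ⟨((k0 : ZMod (2 ^ (n - 2))), (a : ZMod 2), (b0 : ZMod 2)), ?_⟩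
    obtain ⟨h1, h2⟩ := toAut_spec ((k0 : ZMod (2 ^ (n - 2))), (a : ZMod 2), (b0 : ZMod 2))
    have hkval : ((k0 : ZMod (2 ^ (n - 2)))).val = k0 := ZMod.val_cast_of_lt hk0lt
    have haval : ((a : ZMod 2)).val = a := ZMod.val_cast_of_lt (by omega)
    have hbval : ((b0 : ZMod 2)).val = b0 := ZMod.val_cast_of_lt (by omega)
    have hbv : b0 * 2 ^ (n - 2) = v := by
      rcases hv with rfl | rfl
      · rw [hb0]; simp
      · rw [hb0]
        rw [if_neg (pow_pos (by norm_num : (0:ℕ) < 2) (n - 2)).ne']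
        ring
    dsimp only at h1 h2
    simp only [hkval, haval, hbval, hbv] at h1 h2
    rw [show 2 * k0 + 1 = u from by omega] at h1
    exact (part1 u a v ⟨k0, hk0⟩ hu2 ha hv).unique ⟨h1, h2⟩ ⟨hψx, hψy⟩

end part4

end QAux

/-- For `n ≥ 4`: for each odd `u` with `0 < u < 2^(n-1)`, each `a ∈ {0,1}` and each
`v ∈ {0, 2^(n-2)}`, the assignment `x ↦ y^a x^u`, `y ↦ y x^v` extends to a (unique)
automorphism `ψ_(u,a,v)` of `QA_n`; every automorphism of `QA_n` is of this form;
these `2^n` automorphisms are pairwise distinct (the parameters are determined by the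
images of `x` and `y`); and consequently `Aut(QA_n)` has order `2^n`. -/
theorem stmt8 (n : ℕ) (hn : 4 ≤ n) :
    (∀ u a v : ℕ, Odd u → u < 2 ^ (n - 1) → a ≤ 1 → (v = 0 ∨ v = 2 ^ (n - 2)) →
      ∃! ψ : MulAut (QA n), ψ (qx n) = qy n ^ a * qx n ^ u ∧ ψ (qy n) = qy n * qx n ^ v) ∧
    (∀ ψ : MulAut (QA n), ∃ u a v : ℕ, Odd u ∧ u < 2 ^ (n - 1) ∧ a ≤ 1 ∧
      (v = 0 ∨ v = 2 ^ (n - 2)) ∧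
      ψ (qx n) = qy n ^ a * qx n ^ u ∧ ψ (qy n) = qy n * qx n ^ v) ∧
    (∀ u a v u' a' v' : ℕ, Odd u → u < 2 ^ (n - 1) → a ≤ 1 → (v = 0 ∨ v = 2 ^ (n - 2)) →
      Odd u' → u' < 2 ^ (n - 1) → a' ≤ 1 → (v' = 0 ∨ v' = 2 ^ (n - 2)) →
      qy n ^ a * qx n ^ u = qy n ^ a' * qx n ^ u' → qy n * qx n ^ v = qy n * qx n ^ v' →
      u = u' ∧ a = a' ∧ v = v') ∧
    Nat.card (MulAut (QA n)) = 2 ^ n := by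
  haveI : Fact (4 ≤ n) := ⟨hn⟩
  refine ⟨?_, ?_, ?_, ?_⟩
  · intro u a v hu hu2 ha hv
    exact QAux.part1 u a v hu hu2 ha hv
  · intro ψ
    exact QAux.part2 ψ
  · intro u a v u' a' v' hu hu2 ha hv hu' hu2' ha' hv' e1 e2
    exact QAux.part3 u a v u' a' v' hu2 ha hv hu2' ha' hv' e1 e2
  · calc Nat.card (MulAut (QA n))
        = Nat.card (ZMod (2 ^ (n - 2)) × ZMod 2 × ZMod 2) :=
          (Nat.card_congr (Equiv.ofBijective _ QAux.toAut_bij)).symm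
      _ = 2 ^ (n - 2) * (2 * 2) := by
          simp [Nat.card_prod, Nat.card_zmod]
      _ = 2 ^ n := by
          rw [show (2 * 2 : ℕ) = 2 ^ 2 from rfl, ← pow_add]
          congr 1
          omega
end

section
/- Let n ≥ 4. The elements u = y, v = y x^{-1}, w = x of the quasi-abelian group QA_n satisfy u v w = 1, u has order 2, v has order 2^{n-1}, w has order 2^{n-1}, and {u, v, w} generates QA_n. In other words, QA_n is a smooth quotient of the (2, 2^{n-1}, 2^{n-1}) triangle group, i.e., it admits a generating triple with product 1 whose entries have orders exactly 2, 2^{n-1} and 2^{n-1}. -/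
namespace QAAux

/-- Concrete model of `QA_(m+4)`: pairs in `ZMod (2^(m+3)) × Bool` with twisted
multiplication. -/
@[ext]
structure QM (m : ℕ) where
  a : ZMod (2 ^ (m + 3))
  b : Bool

variable {m : ℕ}

/-- The multiplier `2^(m+2) + 1`. -/
def kk (m : ℕ) : ZMod (2 ^ (m + 3)) := 2 ^ (m + 2) + 1

lemma two_pow_eq_zero {j : ℕ} (h : m + 3 ≤ j) : (2 : ZMod (2 ^ (m + 3))) ^ j = 0 := by
  have h2 : ((2 ^ j : ℕ) : ZMod (2 ^ (m + 3))) = 0 := by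
    rw [ZMod.natCast_eq_zero_iff]
    exact pow_dvd_pow 2 h
  push_cast at h2
  exact h2

lemma two_pow_ne_zero : (2 : ZMod (2 ^ (m + 3))) ^ (m + 2) ≠ 0 := by
  have h2 : ¬ ((2 ^ (m + 2) : ℕ) : ZMod (2 ^ (m + 3))) = 0 := by
    rw [ZMod.natCast_eq_zero_iff]
    intro h
    have := Nat.le_of_dvd (by positivity) h
    exact absurd this (by simpa using Nat.pow_lt_pow_right one_lt_two (by omega))
  push_cast at h2
  exact h2

lemma kk_sq : kk m * kk m = 1 := by
  have h := two_pow_eq_zero (m := m) (j := m + 3) le_rfl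
  unfold kk
  linear_combination ((2 : ZMod (2 ^ (m + 3))) ^ (m + 1) + 1) * h

/-- Twisting coefficient. -/
def cc (m : ℕ) (b : Bool) : ZMod (2 ^ (m + 3)) := bif b then kk m else 1

lemma cc_mul_cc (b : Bool) : cc m b * cc m b = 1 := by
  cases b <;> simp [cc, kk_sq]

lemma cc_xor (b₁ b₂ : Bool) : cc m (xor b₁ b₂) = cc m b₁ * cc m b₂ := by
  cases b₁ <;> cases b₂ <;> simp [cc, kk_sq]

instance : Mul (QM m) := ⟨fun p q => ⟨p.a + cc m p.b * q.a, xor p.b q.b⟩⟩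
instance : One (QM m) := ⟨⟨0, false⟩⟩
instance : Inv (QM m) := ⟨fun p => ⟨-(cc m p.b * p.a), p.b⟩⟩

lemma mul_def (p q : QM m) : p * q = ⟨p.a + cc m p.b * q.a, xor p.b q.b⟩ := rfl
lemma one_def : (1 : QM m) = ⟨0, false⟩ := rfl
lemma inv_def (p : QM m) : p⁻¹ = ⟨-(cc m p.b * p.a), p.b⟩ := rfl

instance : Group (QM m) :=
  Group.ofLeftAxioms
    (fun p q r => by
      simp only [mul_def, cc_xor]
      ext
      · ring
      · simp [Bool.xor_assoc])
    (fun p => by simp [mul_def, one_def, cc])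
    (fun p => by
      simp only [mul_def, inv_def, one_def]
      ext
      · ring
      · simp)

/-- The model of `x`. -/
def x' (m : ℕ) : QM m := ⟨1, false⟩
/-- The model of `y`. -/
def y' (m : ℕ) : QM m := ⟨0, true⟩

lemma pow_false (t : ZMod (2 ^ (m + 3))) (j : ℕ) :
    (⟨t, false⟩ : QM m) ^ j = ⟨(j : ZMod (2 ^ (m + 3))) * t, false⟩ := by
  induction j with
  | zero => simp [one_def]
  | succ j ih =>
      rw [pow_succ, ih, mul_def]
      ext
      · simp only [cc, cond_false, mul_one]
        push_cast
        ring
      · simp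

lemma x'_pow (j : ℕ) : x' m ^ j = ⟨(j : ZMod (2 ^ (m + 3))), false⟩ := by
  rw [x', pow_false]; simp

lemma orderOf_x' : orderOf (x' m) = 2 ^ (m + 3) := by
  apply orderOf_eq_prime_pow
  · rw [x'_pow]
    intro h
    have := congrArg QM.a h
    simp only [one_def] at this
    push_cast at this
    exact two_pow_ne_zero this
  · rw [x'_pow, one_def]
    ext
    · push_cast
      exact two_pow_eq_zero le_rfl
    · rfl

lemma y'_sq : y' m * y' m = 1 := by
  simp [y', mul_def, one_def]

lemma orderOf_y' : orderOf (y' m) = 2 := by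
  apply orderOf_eq_prime
  · rw [pow_two, y'_sq]
  · intro h
    have := congrArg QM.b h
    simp [y', one_def] at this

/-- The model of `v = y x⁻¹`. -/
lemma v'_eq : y' m * (x' m)⁻¹ = ⟨-(kk m), true⟩ := by
  simp [y', x', mul_def, inv_def, cc]

lemma v'_sq : (y' m * (x' m)⁻¹) ^ 2 = (⟨-(kk m + 1), false⟩ : QM m) := by
  rw [pow_two, v'_eq, mul_def]
  ext
  · simp only [cc, cond_true]
    linear_combination (-1 : ZMod (2 ^ (m + 3))) * kk_sq (m := m)
  · rfl

lemma v'_pow_2 (j : ℕ) :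
    (y' m * (x' m)⁻¹) ^ (2 * j) =
      (⟨(j : ZMod (2 ^ (m + 3))) * (-(kk m + 1)), false⟩ : QM m) := by
  rw [pow_mul, v'_sq, pow_false]

lemma orderOf_v' : orderOf (y' m * (x' m)⁻¹) = 2 ^ (m + 3) := by
  have h := two_pow_eq_zero (m := m) (j := m + 3) le_rfl
  apply orderOf_eq_prime_pow
  · rw [show (2 : ℕ) ^ (m + 2) = 2 * 2 ^ (m + 1) by ring, v'_pow_2]
    intro hc
    have hc' := congrArg QM.a hc
    simp only [one_def] at hc'
    push_cast at hc'
    apply two_pow_ne_zero (m := m)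
    have h23 : (2 : ZMod (2 ^ (m + 3))) ^ (2 * m + 3) = 0 := two_pow_eq_zero (by omega)
    unfold kk at hc'
    linear_combination -hc' - h23
  · rw [show (2 : ℕ) ^ (m + 3) = 2 * 2 ^ (m + 2) by ring, v'_pow_2, one_def]
    ext
    · push_cast
      unfold kk
      have h24 : (2 : ZMod (2 ^ (m + 3))) ^ (2 * m + 4) = 0 := two_pow_eq_zero (by omega)
      linear_combination -h24 - h
    · rfl

/-- The map sending the generators to their models. -/
def f0 (m : ℕ) : Bool → QM m := fun b => bif b then x' m else y' m

lemma rel3' : y' m * x' m * (y' m)⁻¹ = x' m ^ (2 ^ (m + 2) + 1) := by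
  rw [x'_pow]
  simp only [y', x', mul_def, inv_def, cc]
  ext
  · push_cast
    simp [kk]
  · rfl

lemma hrels : ∀ r ∈ qaRels (m + 4), FreeGroup.lift (f0 m) r = 1 := by
  intro r hr
  have e1 : m + 4 - 1 = m + 3 := by omega
  have e2 : m + 4 - 2 = m + 2 := by omega
  simp only [qaRels, e1, e2, Set.mem_insert_iff, Set.mem_singleton_iff] at hr
  rcases hr with rfl | rfl | rfl
  · rw [map_pow, FreeGroup.lift_apply_of]
    show x' m ^ 2 ^ (m + 3) = 1
    rw [x'_pow, one_def]
    ext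
    · push_cast
      exact two_pow_eq_zero le_rfl
    · rfl
  · rw [map_pow, FreeGroup.lift_apply_of]
    show y' m ^ 2 = 1
    rw [pow_two, y'_sq]
  · simp only [map_mul, map_inv, map_pow, FreeGroup.lift_apply_of]
    show y' m * x' m * (y' m)⁻¹ * (x' m ^ (2 ^ (m + 2) + 1))⁻¹ = 1
    rw [mul_inv_eq_one, rel3']

/-- The homomorphism from the presented group onto the model. -/
def φ (m : ℕ) : QA (m + 4) →* QM m := PresentedGroup.toGroup hrels

lemma φ_x : φ m (qx (m + 4)) = x' m := PresentedGroup.toGroup.of hrels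
lemma φ_y : φ m (qy (m + 4)) = y' m := PresentedGroup.toGroup.of hrels

lemma rel_one {α : Type*} {rels : Set (FreeGroup α)} {r : FreeGroup α} (h : r ∈ rels) :
    PresentedGroup.mk rels r = 1 :=
  (QuotientGroup.eq_one_iff r).mpr (Subgroup.subset_normalClosure h)

lemma hX : qx (m + 4) ^ 2 ^ (m + 3) = 1 := by
  have e1 : m + 4 - 1 = m + 3 := by omega
  have := rel_one (rels := qaRels (m + 4)) (r := FreeGroup.of true ^ 2 ^ (m + 4 - 1))
    (by simp [qaRels])
  rw [map_pow] at this
  rw [← e1]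
  exact this

lemma hY : qy (m + 4) ^ 2 = 1 := by
  have := rel_one (rels := qaRels (m + 4)) (r := FreeGroup.of false ^ 2)
    (by simp [qaRels])
  rw [map_pow] at this
  exact this

lemma hR : qy (m + 4) * qx (m + 4) * (qy (m + 4))⁻¹ = qx (m + 4) ^ (2 ^ (m + 2) + 1) := by
  have e2 : m + 4 - 2 = m + 2 := by omega
  have := rel_one (rels := qaRels (m + 4))
    (r := FreeGroup.of false * FreeGroup.of true * (FreeGroup.of false)⁻¹ *
      (FreeGroup.of true ^ (2 ^ (m + 4 - 2) + 1))⁻¹)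
    (by simp [qaRels])
  simp only [map_mul, map_inv, map_pow] at this
  rw [mul_inv_eq_one] at this
  rw [← e2]
  exact this

lemma hV : (qy (m + 4) * (qx (m + 4))⁻¹) ^ 2 ^ (m + 3) = 1 := by
  set Y := qy (m + 4)
  set X := qx (m + 4)
  have hR' : Y * X⁻¹ * Y⁻¹ = (X ^ (2 ^ (m + 2) + 1))⁻¹ := by
    rw [← hR]; exact (by intro a b; group : ∀ a b : QA (m + 4), a * b⁻¹ * a⁻¹ = (a * b * a⁻¹)⁻¹) _ _
  have h2 : (Y * X⁻¹) ^ 2 = (X ^ (2 ^ (m + 2) + 2))⁻¹ := by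
    have c1 : (Y * X⁻¹) ^ 2 = (Y * X⁻¹ * Y⁻¹) * (Y * Y) * X⁻¹ := by
      rw [pow_two]; group
    rw [c1, hR', show Y * Y = Y ^ 2 from (pow_two Y).symm, hY, mul_one]
    rw [show 2 ^ (m + 2) + 2 = 2 ^ (m + 2) + 1 + 1 from rfl, ← mul_inv_rev, ← pow_succ']
  rw [show (2 : ℕ) ^ (m + 3) = 2 * 2 ^ (m + 2) by ring, pow_mul, h2, inv_pow, ← pow_mul]
  rw [show (2 ^ (m + 2) + 2) * 2 ^ (m + 2) = 2 ^ (m + 3) * (2 ^ (m + 1) + 1) by ring]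
  rw [pow_mul, hX, one_pow, inv_one]

end QAAux

/-- For `n ≥ 4`, the elements `u = y`, `v = y x⁻¹`, `w = x` of `QA_n` satisfy
`u v w = 1`, have orders `2`, `2^(n-1)`, `2^(n-1)` respectively, and generate `QA_n`;
i.e. `QA_n` is a smooth quotient of the `(2, 2^(n-1), 2^(n-1))` triangle group. -/
theorem stmt10 (n : ℕ) (hn : 4 ≤ n) :
    qy n * (qy n * (qx n)⁻¹) * qx n = 1 ∧
    orderOf (qy n) = 2 ∧
    orderOf (qy n * (qx n)⁻¹) = 2 ^ (n - 1) ∧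
    orderOf (qx n) = 2 ^ (n - 1) ∧
    Subgroup.closure {qy n, qy n * (qx n)⁻¹, qx n} = (⊤ : Subgroup (QA n)) := by
  obtain ⟨m, rfl⟩ : ∃ m, n = m + 4 := ⟨n - 4, by omega⟩
  have e1 : m + 4 - 1 = m + 3 := by omega
  rw [e1]
  open QAAux in
  refine ⟨?_, ?_, ?_, ?_, ?_⟩
  · have h : qy (m + 4) * (qy (m + 4) * (qx (m + 4))⁻¹) * qx (m + 4) = qy (m + 4) * qy (m + 4) := by
      group
    rw [h, ← pow_two, QAAux.hY]
  · refine Nat.dvd_antisymm (orderOf_dvd_of_pow_eq_one QAAux.hY) ?_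
    have := orderOf_map_dvd (QAAux.φ m) (qy (m + 4))
    rwa [QAAux.φ_y, QAAux.orderOf_y'] at this
  · refine Nat.dvd_antisymm (orderOf_dvd_of_pow_eq_one QAAux.hV) ?_
    have := orderOf_map_dvd (QAAux.φ m) (qy (m + 4) * (qx (m + 4))⁻¹)
    rwa [map_mul, map_inv, QAAux.φ_y, QAAux.φ_x, QAAux.orderOf_v'] at this
  · refine Nat.dvd_antisymm (orderOf_dvd_of_pow_eq_one QAAux.hX) ?_
    have := orderOf_map_dvd (QAAux.φ m) (qx (m + 4))
    rwa [QAAux.φ_x, QAAux.orderOf_x'] at this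
  · refine le_antisymm le_top ?_
    rw [← PresentedGroup.closure_range_of (qaRels (m + 4))]
    refine (Subgroup.closure_le _).mpr ?_
    rintro _ ⟨b, rfl⟩
    cases b
    · exact Subgroup.subset_closure (by left; rfl)
    · exact Subgroup.subset_closure (by right; right; rfl)
end

section
/- Let n ≥ 4. If u, v, w are elements of the quasi-abelian group QA_n with u v w = 1, u of order 2, v of order 2^{n-1}, w of order 2^{n-1}, and {u, v, w} generating QA_n, then there exists an automorphism φ of QA_n with φ(u) = y, φ(v) = y x^{-1} and φ(w) = x. In particular, any two such generating triples of QA_n are equivalent under Aut(QA_n). -/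
namespace QA11

instance instNZ (k : ℕ) : NeZero (2 ^ (k + 2)) := ⟨by positivity⟩

/-- concrete model of QA (k+3): pairs (a, e) with a : ZMod (2^(k+2)), e : Bool. -/
@[ext] structure Cc (k : ℕ) where
  a : ZMod (2 ^ (k + 2))
  e : Bool

namespace Cc

variable {k : ℕ}

/-- `r = 2^(k+1) + 1`. -/
def rr (k : ℕ) : ZMod (2 ^ (k + 2)) := 2 ^ (k + 1) + 1

lemma two_pow_self (k : ℕ) : (2 : ZMod (2 ^ (k + 2))) ^ (k + 2) = 0 := by
  have := ZMod.natCast_self (2 ^ (k + 2))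
  push_cast at this
  exact this

lemma rr_sq (k : ℕ) : rr k * rr k = 1 := by
  have h := two_pow_self k
  unfold rr
  linear_combination ((2:ZMod (2^(k+2)))^k + 1) * h

/-- twist -/
def tw (k : ℕ) (e : Bool) : ZMod (2 ^ (k + 2)) := cond e (rr k) 1

lemma tw_mul (e f : Bool) : tw k (xor e f) = tw k e * tw k f := by
  cases e <;> cases f <;> simp [tw, rr_sq k]

instance : Mul (Cc k) := ⟨fun p q => ⟨p.a + tw k p.e * q.a, xor p.e q.e⟩⟩
instance : One (Cc k) := ⟨⟨0, false⟩⟩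
instance : Inv (Cc k) := ⟨fun p => ⟨-(tw k p.e * p.a), p.e⟩⟩

lemma mul_def (p q : Cc k) : p * q = ⟨p.a + tw k p.e * q.a, xor p.e q.e⟩ := rfl
lemma one_def : (1 : Cc k) = ⟨0, false⟩ := rfl
lemma inv_def (p : Cc k) : p⁻¹ = ⟨-(tw k p.e * p.a), p.e⟩ := rfl

instance : Group (Cc k) where
  mul_assoc p q s := by
    simp only [mul_def]; ext
    · simp only [tw_mul]; ring
    · simp [Bool.xor_assoc]
  one_mul p := by ext <;> simp [mul_def, one_def, tw]
  mul_one p := by ext <;> simp [mul_def, one_def, tw]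
  inv_mul_cancel p := by
    simp only [mul_def, inv_def, one_def]; ext <;> simp

/-- generator x -/
def X (k : ℕ) : Cc k := ⟨1, false⟩
/-- generator y -/
def Y (k : ℕ) : Cc k := ⟨0, true⟩

lemma pow_false (a : ZMod (2 ^ (k + 2))) (j : ℕ) :
    (⟨a, false⟩ : Cc k) ^ j = ⟨(j : ZMod (2 ^ (k + 2))) * a, false⟩ := by
  induction j with
  | zero => simp [one_def]
  | succ j ih =>
    rw [pow_succ, ih, mul_def]
    ext
    · simp only [tw, Bool.cond_false, Nat.cast_add, Nat.cast_one]; ring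
    · rfl

/-- projection to second component as hom to ZMod 2 -/
def pi1 (k : ℕ) : Cc k →* Multiplicative (ZMod 2) where
  toFun p := Multiplicative.ofAdd (cond p.e 1 0)
  map_one' := rfl
  map_mul' p q := by
    show Multiplicative.ofAdd (cond (xor p.e q.e) 1 0)
      = Multiplicative.ofAdd (cond p.e 1 0) * Multiplicative.ofAdd (cond q.e 1 0)
    rw [← ofAdd_add]
    congr 1
    cases p.e <;> cases q.e <;> decide

/-- cast to ZMod 2 -/
def ch (k : ℕ) : ZMod (2 ^ (k + 2)) →+* ZMod 2 :=
  ZMod.castHom (show 2 ∣ 2 ^ (k + 2) from ⟨2 ^ (k + 1), by ring⟩) (ZMod 2)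

lemma ch_two (k : ℕ) : ch k 2 = 0 := by
  have h : ((2 : ℕ) : ZMod (2 ^ (k + 2))) = (2 : ZMod (2 ^ (k + 2))) := by push_cast; rfl
  rw [← h, map_natCast]
  decide

lemma ch_tw (e : Bool) : ch k (tw k e) = 1 := by
  cases e
  · simp [tw]
  · show ch k (rr k) = 1
    unfold rr
    rw [map_add, map_pow, map_one, ch_two, zero_pow (by omega : k + 1 ≠ 0), zero_add]

lemma ch_val (c : ZMod (2 ^ (k + 2))) : ch k c = ((c.val : ℕ) : ZMod 2) := by
  rw [ch, ZMod.castHom_apply, ZMod.natCast_val]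

/-- the "total parity" hom -/
def pi2 (k : ℕ) : Cc k →* Multiplicative (ZMod 2) where
  toFun p := Multiplicative.ofAdd (ch k p.a + cond p.e 1 0)
  map_one' := by
    show Multiplicative.ofAdd (ch k 0 + 0) = 1
    simp
  map_mul' p q := by
    show Multiplicative.ofAdd (ch k (p.a + tw k p.e * q.a) + cond (xor p.e q.e) 1 0) = _
    rw [← ofAdd_add]
    congr 1
    rw [map_add, map_mul, ch_tw, one_mul]
    have : ∀ e f : Bool, (cond (xor e f) 1 0 : ZMod 2) = cond e 1 0 + cond f 1 0 := by decide
    rw [this]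
    ring

lemma ofAdd_one_ne_one : Multiplicative.ofAdd (1 : ZMod 2) ≠ 1 := by decide

lemma no_gen {k : ℕ} {U V W : Cc k} (π : Cc k →* Multiplicative (ZMod 2))
    (hU : π U = 1) (hV : π V = 1) (hW : π W = 1)
    (hgen : Subgroup.closure {U, V, W} = ⊤) (z : Cc k) (hz : π z ≠ 1) : False := by
  have hle : Subgroup.closure {U, V, W} ≤ π.ker := by
    rw [Subgroup.closure_le]
    rintro t (rfl | rfl | rfl) <;> assumption
  exact hz (hle (hgen ▸ Subgroup.mem_top z))

lemma val_dvd_of_mul_eq_zero {t : ℕ} {c : ZMod (2 ^ (k + 2))}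
    (h : (t : ZMod (2 ^ (k + 2))) * c = 0) : 2 ^ (k + 2) ∣ t * c.val := by
  rw [← ZMod.natCast_eq_zero_iff]
  push_cast
  rw [ZMod.natCast_val, ZMod.cast_id]
  exact h

lemma cast_val_eq (c : ZMod (2 ^ (k + 2))) : ((c.val : ℕ) : ZMod (2 ^ (k + 2))) = c := by
  rw [ZMod.natCast_val, ZMod.cast_id]

/-- from `(1 + rr) c = 0` deduce `2^(k+2) c = 0`, for `k = j+1`. -/
lemma hmc_of (j : ℕ) {c : ZMod (2 ^ (j + 3))} (hc : c + (2 ^ (j + 2) + 1) * c = 0) :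
    (2 : ZMod (2 ^ (j + 3))) ^ (j + 2) * c = 0 := by
  have h0 : (2 : ZMod (2 ^ (j + 3))) ^ (j + 3) = 0 := two_pow_self (j + 1)
  have hc' : ((2 ^ (j + 2) + 2 : ℕ) : ZMod (2 ^ (j + 3))) * c = 0 := by
    push_cast
    linear_combination hc
  have hdvd : 2 ^ (j + 3) ∣ (2 ^ (j + 2) + 2) * c.val := val_dvd_of_mul_eq_zero hc'
  have hdvd2 : 2 ^ (j + 2) ∣ (2 ^ (j + 1) + 1) * c.val := by
    have h2 : 2 * 2 ^ (j + 2) ∣ 2 * ((2 ^ (j + 1) + 1) * c.val) := by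
      calc 2 * 2 ^ (j + 2) = 2 ^ (j + 3) := by ring
      _ ∣ (2 ^ (j + 2) + 2) * c.val := hdvd
      _ = 2 * ((2 ^ (j + 1) + 1) * c.val) := by ring
    exact (Nat.mul_dvd_mul_iff_left (by norm_num : 0 < 2)).mp h2
  have hodd : ¬ 2 ∣ (2 ^ (j + 1) + 1) := by
    intro h
    have : 2 ∣ 2 ^ (j + 1) := dvd_pow_self 2 (by omega)
    omega
  have hcop : Nat.Coprime (2 ^ (j + 2)) (2 ^ (j + 1) + 1) := by
    apply Nat.Coprime.pow_left
    rcases Nat.coprime_or_dvd_of_prime Nat.prime_two (2 ^ (j + 1) + 1) with h | h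
    · exact h
    · exact absurd h hodd
  have hdvd3 : 2 ^ (j + 2) ∣ c.val := hcop.dvd_of_dvd_mul_left hdvd2
  obtain ⟨t, ht⟩ := hdvd3
  have hcform : c = 2 ^ (j + 2) * (t : ZMod (2 ^ (j + 3))) := by
    rw [← cast_val_eq c, ht]; push_cast; ring
  rw [hcform]
  linear_combination ((2 : ZMod (2 ^ (j + 3))) ^ (j + 1) * (t : ZMod (2 ^ (j + 3)))) * h0

/-- main classification lemma: forced conjugation relation. -/
lemma key_rel (j : ℕ) (U W : Cc (j + 1)) (hU : U * U = 1) (hW : orderOf W = 2 ^ (j + 3))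
    (hgen : Subgroup.closure {U, U * W⁻¹, W} = ⊤) :
    U * W * U⁻¹ = W ^ (2 ^ (j + 2) + 1) := by
  obtain ⟨c, eu⟩ := U
  obtain ⟨a, ew⟩ := W
  have h0 : (2 : ZMod (2 ^ (j + 3))) ^ (j + 3) = 0 := two_pow_self (j + 1)
  have hrrsq : ((2 : ZMod (2 ^ (j + 3))) ^ (j + 2) + 1) * (2 ^ (j + 2) + 1) = 1 := rr_sq (j + 1)
  rw [mul_def] at hU
  cases eu
  all_goals simp only [one_def, Cc.mk.injEq, Bool.xor_self, and_true, tw, rr, Bool.cond_false,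
    Bool.cond_true, one_mul] at hU
  · -- u = (c, false)
    exfalso
    cases ew
    · exact no_gen (pi1 (j + 1)) rfl rfl rfl hgen ⟨0, true⟩ ofAdd_one_ne_one
    · -- u = (c,false) with 2c = 0, w = (a,true) of full order
      have hch_a : ch (j + 1) a = 1 := by
        by_contra hne
        have ha0 : ch (j + 1) a = 0 := by
          have h01 : ∀ t : ZMod 2, t = 0 ∨ t = 1 := by decide
          rcases h01 (ch (j + 1) a) with h | h
          · exact h
          · exact absurd h hne
        rw [ch_val] at ha0
        have h2a : (2 : ℕ) ∣ a.val := by rwa [ZMod.natCast_eq_zero_iff] at ha0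
        obtain ⟨t, ht⟩ := h2a
        have hWpow : (⟨a, true⟩ : Cc (j + 1)) ^ (2 ^ (j + 2)) = 1 := by
          have hsq : (⟨a, true⟩ : Cc (j + 1)) * ⟨a, true⟩
              = ⟨a + (2 ^ (j + 2) + 1) * a, false⟩ := rfl
          have he : (2 : ℕ) ^ (j + 2) = 2 * 2 ^ (j + 1) := by ring
          rw [he, pow_mul, pow_two, hsq, pow_false]
          have haR : a = 2 * (t : ZMod (2 ^ (j + 3))) := by
            rw [← cast_val_eq a, ht]; push_cast; ring
          rw [one_def, Cc.mk.injEq]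
          refine ⟨?_, rfl⟩
          rw [haR]
          push_cast
          linear_combination ((2 : ZMod (2 ^ (j + 3))) ^ (j + 1) * (t : ZMod (2 ^ (j + 3)))
            + (t : ZMod (2 ^ (j + 3)))) * h0
        have hdvd := orderOf_dvd_of_pow_eq_one hWpow
        rw [hW] at hdvd
        have hle := Nat.le_of_dvd (by positivity) hdvd
        have hlt : (2 : ℕ) ^ (j + 2) < 2 ^ (j + 3) := Nat.pow_lt_pow_right (by norm_num) (by omega)
        omega
      have hch_c : ch (j + 1) c = 0 := by
        have h2 : ((2 : ℕ) : ZMod (2 ^ (j + 3))) * c = 0 := by push_cast; linear_combination hU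
        have hd : 2 ^ (j + 2 + 1) ∣ 2 * c.val := val_dvd_of_mul_eq_zero h2
        have hd' : 2 * 2 ^ (j + 2) ∣ 2 * c.val := by
          calc 2 * 2 ^ (j + 2) = 2 ^ (j + 2 + 1) := by ring
          _ ∣ 2 * c.val := hd
        have hd2 : 2 ^ (j + 2) ∣ c.val := (Nat.mul_dvd_mul_iff_left (by norm_num : 0 < 2)).mp hd' 
        have h2c : (2 : ℕ) ∣ c.val := dvd_trans (dvd_pow_self 2 (by omega)) hd2
        rw [ch_val, ZMod.natCast_eq_zero_iff]
        exact h2c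
      have hu1 : pi2 (j + 1) ⟨c, false⟩ = 1 := by
        show Multiplicative.ofAdd (ch (j + 1) c + cond false 1 0) = 1
        rw [hch_c]; rfl
      have hw1 : pi2 (j + 1) ⟨a, true⟩ = 1 := by
        show Multiplicative.ofAdd (ch (j + 1) a + cond true 1 0) = 1
        rw [hch_a]; decide
      have hv1 : pi2 (j + 1) (⟨c, false⟩ * (⟨a, true⟩ : Cc (j + 1))⁻¹) = 1 := by
        rw [map_mul, map_inv, hu1, hw1]; simp
      refine no_gen (pi2 (j + 1)) hu1 hv1 hw1 hgen ⟨1, false⟩ ?_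
      show Multiplicative.ofAdd (ch (j + 1) 1 + cond false 1 0) ≠ 1
      rw [map_one]
      decide
  · -- u = (c, true)
    have hmc := hmc_of j hU
    cases ew
    · -- w = (a, false)
      rw [pow_false, mul_def, inv_def, mul_def]
      simp only [tw, rr, Bool.xor_false, Bool.xor_true, Bool.xor_self, Bool.not_true, Bool.not_false, Bool.cond_true, Bool.cond_false]
      rw [Cc.mk.injEq]
      refine ⟨?_, rfl⟩
      push_cast
      linear_combination (-c) * hrrsq
    · -- w = (a, true)
      have hsq : (⟨a, true⟩ : Cc (j + 1)) * ⟨a, true⟩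
          = ⟨a + (2 ^ (j + 2) + 1) * a, false⟩ := rfl
      have hpow : (⟨a, true⟩ : Cc (j + 1)) ^ (2 ^ (j + 2) + 1)
          = (⟨a + (2 ^ (j + 2) + 1) * a, false⟩ : Cc (j + 1)) ^ (2 ^ (j + 1)) * ⟨a, true⟩ := by
        rw [pow_succ, ← hsq, ← pow_two, ← pow_mul]
        congr 2
        ring
      rw [hpow, pow_false, mul_def, mul_def, inv_def, mul_def]
      simp only [tw, rr, Bool.xor_false, Bool.xor_true, Bool.xor_self, Bool.not_true, Bool.not_false, Bool.cond_true, Bool.cond_false]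
      rw [Cc.mk.injEq]
      refine ⟨?_, rfl⟩
      push_cast
      linear_combination (-1 : ZMod (2 ^ (j + 3))) * hmc
        + (-(2 : ZMod (2 ^ (j + 3))) ^ j * a) * h0

instance instFinite (k : ℕ) : Finite (Cc k) :=
  Finite.of_equiv (ZMod (2 ^ (k + 2)) × Bool)
    ⟨fun p => ⟨p.1, p.2⟩, fun c => (c.a, c.e), fun _ => rfl, fun _ => rfl⟩

end Cc

section Iso

open Cc

lemma mk_rel_one {n : ℕ} {r : FreeGroup Bool} (h : r ∈ qaRels n) :
    PresentedGroup.mk (qaRels n) r = 1 :=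
  (QuotientGroup.eq_one_iff r).mpr (Subgroup.subset_normalClosure h)

lemma qx_pow (n : ℕ) : qx n ^ 2 ^ (n - 1) = 1 := by
  have h := mk_rel_one (n := n) (Set.mem_insert _ _)
  rwa [map_pow] at h

lemma qy_sq (n : ℕ) : qy n * qy n = 1 := by
  have h := mk_rel_one (n := n) (r := FreeGroup.of false ^ 2)
    (Set.mem_insert_iff.mpr (Or.inr (Set.mem_insert _ _)))
  rw [map_pow] at h
  rwa [pow_two] at h

lemma qyx (n : ℕ) : qy n * qx n * (qy n)⁻¹ = qx n ^ (2 ^ (n - 2) + 1) := by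
  have h := mk_rel_one (n := n)
    (r := FreeGroup.of false * FreeGroup.of true * (FreeGroup.of false)⁻¹ *
      (FreeGroup.of true ^ (2 ^ (n - 2) + 1))⁻¹)
    (Set.mem_insert_iff.mpr (Or.inr (Set.mem_insert_iff.mpr (Or.inr rfl))))
  rw [map_mul, map_mul, map_mul, map_inv, map_inv, map_pow] at h
  exact mul_inv_eq_one.mp h

variable (k : ℕ)

/-- the additive hom `ZMod (2^(k+2)) → QA (k+3)`, `a ↦ x^a`. -/
def chi : ZMod (2 ^ (k + 2)) →+ Additive (QA (k + 3)) :=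
  ZMod.lift (2 ^ (k + 2))
    ⟨zmultiplesHom (Additive (QA (k + 3))) (Additive.ofMul (qx (k + 3))), by
      show ((2 ^ (k + 2) : ℕ) : ℤ) • Additive.ofMul (qx (k + 3)) = 0
      have h : qx (k + 3) ^ ((2 ^ (k + 2) : ℕ) : ℤ) = 1 := by
        rw [zpow_natCast]
        exact qx_pow (k + 3)
      rw [← ofMul_zpow, h]
      rfl⟩

/-- `x^a` for `a : ZMod (2^(k+2))`. -/
def xp (a : ZMod (2 ^ (k + 2))) : QA (k + 3) := Additive.toMul (chi k a)

lemma xp_add (a b : ZMod (2 ^ (k + 2))) : xp k (a + b) = xp k a * xp k b := by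
  unfold xp
  rw [map_add]
  rfl

lemma xp_zero : xp k 0 = 1 := by
  unfold xp
  rw [map_zero]
  rfl

lemma xp_natCast (j : ℕ) : xp k ((j : ℕ) : ZMod (2 ^ (k + 2))) = qx (k + 3) ^ j := by
  unfold xp chi
  have hc : ((j : ℕ) : ZMod (2 ^ (k + 2))) = ((j : ℤ) : ZMod (2 ^ (k + 2))) := by push_cast; rfl
  rw [hc, ZMod.lift_coe]
  show Additive.toMul ((j : ℤ) • Additive.ofMul (qx (k + 3))) = qx (k + 3) ^ j
  rw [← ofMul_zpow, zpow_natCast]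
  rfl

lemma xp_one' : xp k 1 = qx (k + 3) := by
  have := xp_natCast k 1
  rw [Nat.cast_one, pow_one] at this
  exact this

lemma conj_xp_nat (j : ℕ) :
    qy (k + 3) * xp k ((j : ℕ) : ZMod (2 ^ (k + 2))) * (qy (k + 3))⁻¹
      = xp k (rr k * ((j : ℕ) : ZMod (2 ^ (k + 2)))) := by
  induction j with
  | zero => simp [xp_zero]
  | succ j ih =>
    have hbase : qy (k + 3) * qx (k + 3) * (qy (k + 3))⁻¹ = xp k (rr k) := by
      rw [qyx (k + 3)]
      have : ((2 ^ (k + 1) + 1 : ℕ) : ZMod (2 ^ (k + 2))) = rr k := by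
        unfold rr; push_cast; ring
      rw [← this, xp_natCast]
      rfl
    have hsplit : ((j + 1 : ℕ) : ZMod (2 ^ (k + 2)))
        = ((j : ℕ) : ZMod (2 ^ (k + 2))) + 1 := by push_cast; ring
    rw [hsplit, xp_add, xp_one']
    have hgrp : qy (k + 3) * (xp k ((j : ℕ) : ZMod (2 ^ (k + 2))) * qx (k + 3)) * (qy (k + 3))⁻¹
        = (qy (k + 3) * xp k ((j : ℕ) : ZMod (2 ^ (k + 2))) * (qy (k + 3))⁻¹)
          * (qy (k + 3) * qx (k + 3) * (qy (k + 3))⁻¹) := by group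
    rw [hgrp, ih, hbase, ← xp_add]
    congr 1
    ring

lemma conj_xp (a : ZMod (2 ^ (k + 2))) :
    qy (k + 3) * xp k a * (qy (k + 3))⁻¹ = xp k (rr k * a) := by
  have h := conj_xp_nat k a.val
  rwa [cast_val_eq] at h

lemma qy_mul_xp (a : ZMod (2 ^ (k + 2))) :
    qy (k + 3) * xp k a = xp k (rr k * a) * qy (k + 3) := by
  have h := conj_xp k a
  rw [← h]
  group

/-- hom from the concrete model to the presented group -/
def gg : Cc k →* QA (k + 3) where
  toFun p := xp k p.a * cond p.e (qy (k + 3)) 1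
  map_one' := by
    show xp k 0 * cond false (qy (k + 3)) 1 = 1
    rw [xp_zero]
    rfl
  map_mul' p q := by
    show xp k (p.a + tw k p.e * q.a) * cond (xor p.e q.e) (qy (k + 3)) 1
      = (xp k p.a * cond p.e (qy (k + 3)) 1) * (xp k q.a * cond q.e (qy (k + 3)) 1)
    have hyy : ∀ z : QA (k + 3), qy (k + 3) * (qy (k + 3) * z) = z := by
      intro z
      rw [← mul_assoc, qy_sq, one_mul]
    have hyx : ∀ (a : ZMod (2 ^ (k + 2))) (z : QA (k + 3)),
        qy (k + 3) * (xp k a * z) = xp k (rr k * a) * (qy (k + 3) * z) := by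
      intro a z
      rw [← mul_assoc, qy_mul_xp, mul_assoc]
    cases hp : p.e <;> cases hq : q.e <;>
      simp only [tw, Bool.cond_false, Bool.cond_true, Bool.xor_false, Bool.xor_true,
        Bool.xor_self, Bool.not_true, Bool.not_false, one_mul, mul_one, xp_add,
        mul_assoc, qy_mul_xp, hyy, hyx, qy_sq]

/-- hom from the presented group to the concrete model -/
def ff : QA (k + 3) →* Cc k :=
  PresentedGroup.toGroup (f := fun b => cond b (X k) (Y k)) (by
    intro r hr
    rcases hr with rfl | rfl | rfl
    · rw [map_pow, FreeGroup.lift_apply_of]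
      show (X k) ^ 2 ^ (k + 2) = 1
      rw [X, pow_false]
      rw [one_def, Cc.mk.injEq]
      refine ⟨?_, rfl⟩
      push_cast
      rw [mul_one]
      exact two_pow_self k
    · rw [map_pow, FreeGroup.lift_apply_of]
      show (Y k) ^ 2 = 1
      rw [pow_two, Y, mul_def, one_def]
      simp only [Cc.mk.injEq, Bool.xor_self, and_true]
      ring
    · rw [map_mul, map_mul, map_mul, map_inv, map_inv, map_pow, FreeGroup.lift_apply_of,
        FreeGroup.lift_apply_of]
      rw [mul_inv_eq_one]
      show Y k * X k * (Y k)⁻¹ = (X k) ^ (2 ^ (k + 1) + 1)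
      rw [X, Y, pow_false, mul_def, inv_def, mul_def]
      simp only [Cc.mk.injEq, tw, rr, Bool.cond_true, Bool.cond_false, Bool.xor_self,
        Bool.xor_true, Bool.xor_false, Bool.not_true]
      refine ⟨by push_cast; ring, trivial⟩)

lemma ff_qx : ff k (qx (k + 3)) = X k := by
  show ff k (PresentedGroup.of true) = X k
  rw [ff, PresentedGroup.toGroup.of]
  rfl

lemma ff_qy : ff k (qy (k + 3)) = Y k := by
  show ff k (PresentedGroup.of false) = Y k
  rw [ff, PresentedGroup.toGroup.of]
  rfl

lemma ff_xp (a : ZMod (2 ^ (k + 2))) : ff k (xp k a) = ⟨a, false⟩ := by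
  have hn : ∀ j : ℕ, ff k (xp k ((j : ℕ) : ZMod (2 ^ (k + 2)))) = ⟨(j : ZMod (2 ^ (k + 2))), false⟩ := by
    intro j
    rw [xp_natCast, map_pow, ff_qx, X, pow_false, mul_one]
  have h := hn a.val
  rwa [cast_val_eq] at h

lemma gg_ff : (gg k).comp (ff k) = MonoidHom.id (QA (k + 3)) := by
  apply PresentedGroup.ext
  intro b
  cases b
  · show gg k (ff k (PresentedGroup.of false)) = PresentedGroup.of false
    have : ff k (PresentedGroup.of false) = Y k := ff_qy k
    rw [this]
    show xp k 0 * cond true (qy (k + 3)) 1 = qy (k + 3)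
    rw [xp_zero, one_mul]
    rfl
  · show gg k (ff k (PresentedGroup.of true)) = PresentedGroup.of true
    have : ff k (PresentedGroup.of true) = X k := ff_qx k
    rw [this]
    show xp k 1 * cond false (qy (k + 3)) 1 = qx (k + 3)
    rw [xp_one']
    exact mul_one _

lemma ff_gg : (ff k).comp (gg k) = MonoidHom.id (Cc k) := by
  apply MonoidHom.ext
  rintro ⟨a, e⟩
  show ff k (xp k a * cond e (qy (k + 3)) 1) = ⟨a, e⟩
  rw [map_mul, ff_xp]
  cases e
  · show (⟨a, false⟩ : Cc k) * ff k 1 = ⟨a, false⟩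
    rw [map_one, mul_one]
  · show (⟨a, false⟩ : Cc k) * ff k (qy (k + 3)) = ⟨a, true⟩
    rw [ff_qy]
    rw [Y, mul_def]
    simp only [Cc.mk.injEq, tw, Bool.cond_false, Bool.xor_false, one_mul]
    refine ⟨by ring, rfl⟩

/-- the isomorphism between the presented group and the concrete model -/
def iso : QA (k + 3) ≃* Cc k := MonoidHom.toMulEquiv (ff k) (gg k) (gg_ff k) (ff_gg k)

instance instFiniteQA : Finite (QA (k + 3)) := Finite.of_equiv (Cc k) (iso k).symm.toEquiv

end Iso

end QA11

open QA11 QA11.Cc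

/-- For `n ≥ 4`, any generating triple `(u, v, w)` of `QA_n` with `u v w = 1` and orders
`2`, `2^(n-1)`, `2^(n-1)` is mapped by some automorphism of `QA_n` to the triple
`(y, y x⁻¹, x)`; in particular any two such triples are `Aut(QA_n)`-equivalent. -/
theorem stmt11 (n : ℕ) (hn : 4 ≤ n) (u v w : QA n) (huvw : u * v * w = 1)
    (hu : orderOf u = 2) (hv : orderOf v = 2 ^ (n - 1)) (hw : orderOf w = 2 ^ (n - 1))
    (hgen : Subgroup.closure {u, v, w} = (⊤ : Subgroup (QA n))) :
    ∃ φ : MulAut (QA n), φ u = qy n ∧ φ v = qy n * (qx n)⁻¹ ∧ φ w = qx n := by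
  obtain ⟨j, rfl⟩ : ∃ j, n = j + 1 + 3 := ⟨n - 4, by omega⟩
  have hu2 : u * u = 1 := by
    have h := pow_orderOf_eq_one u
    rwa [hu, pow_two] at h
  have hinv : u⁻¹ = u := inv_eq_of_mul_eq_one_right hu2
  have hvuw : v = u * w⁻¹ := by
    rw [← hinv, eq_inv_mul_iff_mul_eq]
    exact mul_eq_one_iff_eq_inv.mp huvw
  set E := iso (j + 1) with hE
  have hEw : orderOf (E w) = 2 ^ (j + 3) := by
    have h := orderOf_injective E.toMonoidHom E.injective w
    rw [hw] at h
    exact h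
  have hEu2 : E u * E u = 1 := by rw [← map_mul, hu2, map_one]
  have hEgen : Subgroup.closure {E u, E u * (E w)⁻¹, E w} = ⊤ := by
    have h2 : Subgroup.closure (⇑E.toMonoidHom '' {u, v, w}) = ⊤ := by
      rw [← MonoidHom.map_closure, hgen]
      exact Subgroup.map_top_of_surjective _ E.surjective
    have himg : ⇑E.toMonoidHom '' {u, v, w} = {E u, E u * (E w)⁻¹, E w} := by
      rw [Set.image_insert_eq, Set.image_insert_eq, Set.image_singleton]
      rw [MulEquiv.coe_toMonoidHom, hvuw, map_mul, map_inv]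
    rw [himg] at h2
    exact h2
  have hrel : E u * E w * (E u)⁻¹ = (E w) ^ (2 ^ (j + 2) + 1) :=
    key_rel j (E u) (E w) hEu2 hEw hEgen
  have hrelQ : u * w * u⁻¹ = w ^ (2 ^ (j + 2) + 1) := by
    apply E.injective
    rw [map_mul, map_mul, map_inv, map_pow]
    exact hrel
  have hwpow : w ^ 2 ^ (j + 1 + 3 - 1) = 1 := by
    have h := pow_orderOf_eq_one w
    rwa [hw] at h
  have hrels : ∀ r ∈ qaRels (j + 1 + 3), FreeGroup.lift (fun b => cond b w u) r = 1 := by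
    intro r hr
    rcases hr with rfl | rfl | rfl
    · rw [map_pow, FreeGroup.lift_apply_of]
      exact hwpow
    · rw [map_pow, FreeGroup.lift_apply_of, pow_two]
      exact hu2
    · rw [map_mul, map_mul, map_mul, map_inv, map_inv, map_pow, FreeGroup.lift_apply_of,
        FreeGroup.lift_apply_of, mul_inv_eq_one]
      exact hrelQ
  set ψ : QA (j + 1 + 3) →* QA (j + 1 + 3) := PresentedGroup.toGroup hrels with hψdef
  have hψx : ψ (qx (j + 1 + 3)) = w := PresentedGroup.toGroup.of hrels
  have hψy : ψ (qy (j + 1 + 3)) = u := PresentedGroup.toGroup.of hrels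
  have hψv : ψ (qy (j + 1 + 3) * (qx (j + 1 + 3))⁻¹) = v := by
    rw [map_mul, map_inv, hψx, hψy, ← hvuw]
  have hψsurj : Function.Surjective ψ := by
    have hle : Subgroup.closure {u, v, w} ≤ ψ.range := by
      rw [Subgroup.closure_le]
      rintro t (rfl | rfl | rfl)
      · exact ⟨qy _, hψy⟩
      · exact ⟨qy _ * (qx _)⁻¹, hψv⟩
      · exact ⟨qx _, hψx⟩
    intro z
    exact hle (by rw [hgen]; trivial)
  have hψinj : Function.Injective ψ := Finite.injective_iff_surjective.mpr hψsurj
  refine ⟨(MulEquiv.ofBijective ψ ⟨hψinj, hψsurj⟩).symm, ?_, ?_, ?_⟩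
  · rw [MulEquiv.symm_apply_eq]
    exact hψy.symm
  · rw [MulEquiv.symm_apply_eq]
    exact hψv.symm
  · rw [MulEquiv.symm_apply_eq]
    exact hψx.symm
end

section
/- Let n ≥ 4, let l ≥ 2 be an integer and let r ≥ 1 be an odd integer. Then in the quasi-abelian group QA_n there exist an element d ∈ QA_n \ H_1, elements a_1, …, a_l ∈ H_1 each of order 2, and elements b_1, …, b_r ∈ H_1 each of order 2^{n-2}, such that a_1 ⋯ a_l · b_1 ⋯ b_r · d^2 = 1 and the set {d, a_1, …, a_l, b_1, …, b_r} generates QA_n. -/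
/-! ### Auxiliary material -/

lemma qa_mk_eq_one {n : ℕ} {w : FreeGroup Bool} (hw : w ∈ qaRels n) :
    PresentedGroup.mk (qaRels n) w = 1 :=
  (QuotientGroup.eq_one_iff _).mpr (Subgroup.subset_normalClosure hw)

lemma relx (n : ℕ) : qx n ^ 2 ^ (n - 1) = 1 := by
  have h := qa_mk_eq_one (n := n) (w := FreeGroup.of true ^ 2 ^ (n - 1)) (Set.mem_insert _ _)
  rw [map_pow] at h
  exact h

lemma rely (n : ℕ) : qy n ^ 2 = 1 := by
  have h := qa_mk_eq_one (n := n) (w := FreeGroup.of false ^ 2) (by right; left; rfl)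
  rw [map_pow] at h
  exact h

lemma usq (m : ℕ) : ((2 ^ (m + 2) + 1 : ℕ) : ZMod (2 ^ (m + 3))) *
    ((2 ^ (m + 2) + 1 : ℕ) : ZMod (2 ^ (m + 3))) = 1 := by
  have key : (2 ^ (m + 2) + 1) * (2 ^ (m + 2) + 1) = 2 ^ (m + 3) * (2 ^ (m + 1) + 1) + 1 := by
    ring
  rw [← Nat.cast_mul, key, Nat.cast_add, Nat.cast_mul, ZMod.natCast_self, zero_mul, zero_add,
    Nat.cast_one]

lemma pow_ndvd (m : ℕ) : ¬ (2 ^ (m + 3) ∣ 2 ^ (m + 2)) := by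
  intro h
  have h1 := Nat.le_of_dvd (by positivity) h
  have h2 : (2:ℕ) ^ (m + 2) < 2 ^ (m + 3) := Nat.pow_lt_pow_right (by norm_num) (by omega)
  omega

/-- The multiplier `2^(m+2) + 1` in `ZMod (2^(m+3))`. -/
noncomputable def qu (m : ℕ) : ZMod (2 ^ (m + 3)) := ((2 ^ (m + 2) + 1 : ℕ) : ZMod (2 ^ (m + 3)))

lemma qu_sq (m : ℕ) : qu m * qu m = 1 := usq m

lemma qu_inv (m : ℕ) : Function.Involutive (fun t : ZMod (2 ^ (m + 3)) => qu m * t) := by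
  intro t
  show qu m * (qu m * t) = t
  rw [← mul_assoc, qu_sq, one_mul]

/-- The permutation of `ZMod (2^(m+3))` given by multiplication by `2^(m+2)+1`. -/
noncomputable def ym (m : ℕ) : Equiv.Perm (ZMod (2 ^ (m + 3))) := (qu_inv m).toPerm _

/-- The assignment of generators for the permutation representation of `QA (m+4)`. -/
noncomputable def fm (m : ℕ) : Bool → Equiv.Perm (ZMod (2 ^ (m + 3))) :=
  fun b => cond b (Equiv.addLeft (1 : ZMod (2 ^ (m + 3)))) (ym m)

lemma one_nsmul_cast (M k : ℕ) : (k • (1 : ZMod M)) = (k : ZMod M) := by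
  rw [nsmul_eq_mul, mul_one]

lemma ym_sq (m : ℕ) : ym m * ym m = 1 := by
  ext t
  simp only [ym, Equiv.Perm.mul_apply, Function.Involutive.coe_toPerm, Equiv.Perm.coe_one, id_eq]
  exact qu_inv m t

lemma hfm (m : ℕ) : ∀ w ∈ qaRels (m + 4), FreeGroup.lift (fm m) w = 1 := by
  intro w hw
  simp only [qaRels, Set.mem_insert_iff, Set.mem_singleton_iff] at hw
  have h1 : m + 4 - 1 = m + 3 := rfl
  have h2 : m + 4 - 2 = m + 2 := rfl
  rcases hw with rfl | rfl | rfl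
  · rw [map_pow, FreeGroup.lift_apply_of]
    show Equiv.addLeft (1 : ZMod (2 ^ (m + 3))) ^ 2 ^ (m + 4 - 1) = 1
    rw [h1, Equiv.nsmul_addLeft, one_nsmul_cast, ZMod.natCast_self, Equiv.addLeft_zero]
  · rw [map_pow, FreeGroup.lift_apply_of]
    show ym m ^ 2 = 1
    rw [sq, ym_sq]
  · simp only [map_mul, map_inv, map_pow, FreeGroup.lift_apply_of, h2]
    rw [mul_inv_eq_one]
    show ym m * Equiv.addLeft (1 : ZMod (2 ^ (m + 3))) * (ym m)⁻¹
      = Equiv.addLeft (1 : ZMod (2 ^ (m + 3))) ^ (2 ^ (m + 2) + 1)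
    have hyinv : (ym m)⁻¹ = ym m := by
      rw [← mul_eq_one_iff_inv_eq, ym_sq]
    rw [hyinv, Equiv.nsmul_addLeft, one_nsmul_cast]
    ext t
    simp only [Equiv.Perm.mul_apply, ym, Function.Involutive.coe_toPerm, Equiv.coe_addLeft]
    show qu m * (1 + qu m * t) = _
    rw [mul_add, mul_one, ← mul_assoc, qu_sq, one_mul]
    rfl

/-- The abelianized mod-2 character used to show `qx ∉ H1`. -/
noncomputable def fchi : Bool → Multiplicative (ZMod 2) :=
  fun b => cond b (Multiplicative.ofAdd 1) 1

lemma ofAdd_pow (k : ℕ) (a : ZMod 2) :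
    (Multiplicative.ofAdd a) ^ k = Multiplicative.ofAdd ((k : ZMod 2) * a) := by
  rw [← ofAdd_nsmul, nsmul_eq_mul]

lemma two_pow_zmod2 (k : ℕ) : ((2 ^ (k + 1) : ℕ) : ZMod 2) = 0 := by
  rw [ZMod.natCast_eq_zero_iff]
  exact dvd_pow_self 2 (Nat.succ_ne_zero k)

lemma hfchi (n : ℕ) (hn : 4 ≤ n) : ∀ w ∈ qaRels n, FreeGroup.lift fchi w = 1 := by
  intro w hw
  simp only [qaRels, Set.mem_insert_iff, Set.mem_singleton_iff] at hw
  rcases hw with rfl | rfl | rfl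
  · rw [map_pow, FreeGroup.lift_apply_of]
    show (Multiplicative.ofAdd (1 : ZMod 2)) ^ 2 ^ (n - 1) = 1
    obtain ⟨k, hk⟩ : ∃ k, n - 1 = k + 1 := ⟨n - 2, by omega⟩
    rw [hk, ofAdd_pow, two_pow_zmod2, zero_mul, ofAdd_zero]
  · rw [map_pow, FreeGroup.lift_apply_of]
    show (1 : Multiplicative (ZMod 2)) ^ 2 = 1
    rw [one_pow]
  · simp only [map_mul, map_inv, map_pow, FreeGroup.lift_apply_of]
    show (1 : Multiplicative (ZMod 2)) * Multiplicative.ofAdd 1 * 1⁻¹ *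
      ((Multiplicative.ofAdd (1 : ZMod 2)) ^ (2 ^ (n - 2) + 1))⁻¹ = 1
    obtain ⟨k, hk⟩ : ∃ k, n - 2 = k + 1 := ⟨n - 3, by omega⟩
    rw [hk, ofAdd_pow]
    push_cast
    rw [show (2 : ZMod 2) = 0 from rfl, zero_pow (Nat.succ_ne_zero k)]
    simp

lemma qx_not_mem_H1 (n : ℕ) (hn : 4 ≤ n) : qx n ∉ H1 n := by
  intro hmem
  set χ : QA n →* Multiplicative (ZMod 2) := PresentedGroup.toGroup (hfchi n hn) with hχ
  have hker : H1 n ≤ χ.ker := by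
    rw [H1, Subgroup.closure_le]
    rintro z (rfl | rfl)
    · rw [SetLike.mem_coe, MonoidHom.mem_ker, map_pow]
      show (χ (PresentedGroup.of true)) ^ 2 = 1
      rw [hχ, PresentedGroup.toGroup.of]
      show (Multiplicative.ofAdd (1 : ZMod 2)) ^ 2 = 1
      rw [ofAdd_pow]
      decide
    · rw [SetLike.mem_coe, MonoidHom.mem_ker]
      show χ (PresentedGroup.of false) = 1
      rw [hχ, PresentedGroup.toGroup.of]
      rfl
  have h1 : χ (qx n) = 1 := hker hmem
  rw [hχ, qx, PresentedGroup.toGroup.of] at h1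
  have h2 : (Multiplicative.ofAdd (1 : ZMod 2)) = 1 := h1
  exact absurd h2 (by decide)

lemma ofFn_ite {α : Type*} (l k : ℕ) (hk : k ≤ l) (u v : α) :
    List.ofFn (fun i : Fin l => if (i : ℕ) < k then u else v)
      = List.replicate k u ++ List.replicate (l - k) v := by
  apply List.ext_getElem
  · simp; omega
  · intro i h1 h2
    simp only [List.getElem_ofFn]
    rcases Nat.lt_or_ge i k with h | h
    · rw [List.getElem_append_left (by simpa using h), List.getElem_replicate, if_pos h]
    · rw [List.getElem_append_right (by simpa using h), List.getElem_replicate,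
        if_neg (by omega)]

lemma pow_combo {G : Type*} [Group G] (g : G) (A B C D : ℕ) (h : A + B + D = C) :
    g ^ A * (g ^ B * (g ^ C)⁻¹) * g ^ D = 1 := by
  subst h
  rw [pow_add, pow_add]
  group

/-- For `n ≥ 4`, `l ≥ 2` and odd `r ≥ 1`, there exist `d ∈ QA_n \ H₁`, elements
`a₁, …, a_l ∈ H₁` of order `2` and `b₁, …, b_r ∈ H₁` of order `2^(n-2)` such that
`a₁ ⋯ a_l · b₁ ⋯ b_r · d² = 1` and `{d, a₁, …, a_l, b₁, …, b_r}` generates `QA_n`. -/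
theorem stmt12 (n l r : ℕ) (hn : 4 ≤ n) (hl : 2 ≤ l) (hr : 1 ≤ r) (hrodd : Odd r) :
    ∃ (d : QA n) (a : Fin l → QA n) (b : Fin r → QA n),
      d ∉ H1 n ∧
      (∀ i, a i ∈ H1 n ∧ orderOf (a i) = 2) ∧
      (∀ i, b i ∈ H1 n ∧ orderOf (b i) = 2 ^ (n - 2)) ∧
      (List.ofFn a).prod * (List.ofFn b).prod * d ^ 2 = 1 ∧
      Subgroup.closure ({d} ∪ Set.range a ∪ Set.range b) = (⊤ : Subgroup (QA n)) := by
  obtain ⟨m, rfl⟩ : ∃ m, n = m + 4 := ⟨n - 4, by omega⟩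
  obtain ⟨q, rfl⟩ : ∃ q, l = q + 2 := ⟨l - 2, by omega⟩
  obtain ⟨s, rfl⟩ : ∃ s, r = s + 1 := ⟨r - 1, by omega⟩
  clear hn hl hr
  -- the permutation representation
  set φ : QA (m + 4) →* Equiv.Perm (ZMod (2 ^ (m + 3))) := PresentedGroup.toGroup (hfm m) with hφ
  have φx : φ (qx (m + 4)) = Equiv.addLeft (1 : ZMod (2 ^ (m + 3))) := by
    rw [hφ, qx, PresentedGroup.toGroup.of]; rfl
  have φy : φ (qy (m + 4)) = ym m := by
    rw [hφ, qy, PresentedGroup.toGroup.of]; rfl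
  have relx' : qx (m + 4) ^ 2 ^ (m + 3) = 1 := relx (m + 4)
  have rely' : qy (m + 4) ^ 2 = 1 := rely (m + 4)
  have hdvd : ∀ k : ℕ, qx (m + 4) ^ k = 1 → 2 ^ (m + 3) ∣ k := by
    intro k hk
    have h := congrArg φ hk
    rw [map_pow, φx, map_one, Equiv.nsmul_addLeft, one_nsmul_cast] at h
    have h0 := congrArg (fun p : Equiv.Perm (ZMod (2 ^ (m + 3))) => p 0) h
    simp only [Equiv.coe_addLeft, Equiv.Perm.coe_one, id_eq, add_zero] at h0
    exact (ZMod.natCast_eq_zero_iff _ _).mp h0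
  have hxne : ∀ k : ℕ, ¬ (2 ^ (m + 3) ∣ k) → qx (m + 4) ^ k ≠ 1 :=
    fun k hk h => hk (hdvd k h)
  -- orders of even powers of x
  have hxord : ∀ k : ℕ, Odd k → orderOf (qx (m + 4) ^ (2 * k)) = 2 ^ (m + 2) := by
    intro k hk
    have h1 : (qx (m + 4) ^ (2 * k)) ^ 2 ^ (m + 2) = 1 := by
      rw [← pow_mul, show 2 * k * 2 ^ (m + 2) = 2 ^ (m + 3) * k by ring, pow_mul, relx',
        one_pow]
    have h3 : qx (m + 4) ^ (2 * (k * orderOf (qx (m + 4) ^ (2 * k)))) = 1 := by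
      rw [show 2 * (k * orderOf (qx (m + 4) ^ (2 * k))) = 2 * k * orderOf (qx (m + 4) ^ (2 * k))
        by ring, pow_mul]
      exact pow_orderOf_eq_one _
    have h4 := hdvd _ h3
    have h5 : (2:ℕ) ^ (m + 2) ∣ k * orderOf (qx (m + 4) ^ (2 * k)) := by
      rcases h4 with ⟨c, hc⟩
      refine ⟨c, ?_⟩
      have hc2 : 2 * (k * orderOf (qx (m + 4) ^ (2 * k))) = 2 * (2 ^ (m + 2) * c) := by
        rw [hc]; ring
      omega
    have hk2 : ¬ (2 ∣ k) := by rw [Nat.odd_iff] at hk; omega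
    have hcop : Nat.Coprime (2 ^ (m + 2)) k :=
      Nat.Coprime.pow_left _ ((Nat.prime_two.coprime_iff_not_dvd).mpr hk2)
    have h6 : (2:ℕ) ^ (m + 2) ∣ orderOf (qx (m + 4) ^ (2 * k)) :=
      (Nat.Coprime.dvd_of_dvd_mul_left hcop h5)
    exact Nat.dvd_antisymm (orderOf_dvd_of_pow_eq_one h1) h6
  -- y has order 2
  have hyne : qy (m + 4) ≠ 1 := by
    intro h
    have h' := congrArg φ h
    rw [φy, map_one] at h'
    have h0 := congrArg (fun p : Equiv.Perm (ZMod (2 ^ (m + 3))) => p 1) h'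
    simp only [ym, Function.Involutive.coe_toPerm, Equiv.Perm.coe_one, id_eq, mul_one] at h0
    have h1 : ((2 ^ (m + 2) : ℕ) : ZMod (2 ^ (m + 3))) = 0 := by
      have : qu m = 1 := h0
      rw [qu, Nat.cast_add, Nat.cast_one, add_eq_right] at this
      exact this
    exact pow_ndvd m ((ZMod.natCast_eq_zero_iff _ _).mp h1)
  have hyord : orderOf (qy (m + 4)) = 2 := orderOf_eq_prime rely' hyne
  -- the torsion element t = x^(2^(m+2))
  have htsq : (qx (m + 4) ^ 2 ^ (m + 2)) ^ 2 = 1 := by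
    rw [← pow_mul, show 2 ^ (m + 2) * 2 = 2 ^ (m + 3) by ring, relx']
  have htne : qx (m + 4) ^ 2 ^ (m + 2) ≠ 1 := hxne _ (pow_ndvd m)
  have htord : orderOf (qx (m + 4) ^ 2 ^ (m + 2)) = 2 := orderOf_eq_prime htsq htne
  -- memberships
  have hx2mem : qx (m + 4) ^ 2 ∈ H1 (m + 4) :=
    Subgroup.subset_closure (Set.mem_insert _ _)
  have hymem : qy (m + 4) ∈ H1 (m + 4) :=
    Subgroup.subset_closure (Set.mem_insert_of_mem _ rfl)
  have hxpowmem : ∀ k : ℕ, qx (m + 4) ^ (2 * k) ∈ H1 (m + 4) := by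
    intro k
    rw [pow_mul]
    exact Subgroup.pow_mem _ hx2mem k
  -- the data
  set k0 : ℕ := 2 ^ (m + 1) * q + (s + 1) with hk0
  have hk0odd : Odd k0 := by
    rw [hk0]
    apply Even.add_odd
    · exact (Even.mul_right (by simp [Nat.even_pow]) q)
    · exact hrodd
  refine ⟨qx (m + 4),
    (fun i => if (i : ℕ) < 2 then qy (m + 4) else qx (m + 4) ^ 2 ^ (m + 2)),
    (fun j => if (j : ℕ) < s then qx (m + 4) ^ 2 else (qx (m + 4) ^ (2 * k0))⁻¹),
    qx_not_mem_H1 (m + 4) (by omega), ?_, ?_, ?_, ?_⟩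
  · intro i
    dsimp only
    by_cases h : (i : ℕ) < 2
    · rw [if_pos h]
      exact ⟨hymem, hyord⟩
    · rw [if_neg h]
      refine ⟨?_, htord⟩
      have : (2:ℕ) ^ (m + 2) = 2 * 2 ^ (m + 1) := by ring
      rw [this]
      exact hxpowmem _
  · intro j
    dsimp only
    have hgoal : m + 4 - 2 = m + 2 := rfl
    rw [hgoal]
    by_cases h : (j : ℕ) < s
    · rw [if_pos h]
      refine ⟨hx2mem, ?_⟩
      have : qx (m + 4) ^ 2 = qx (m + 4) ^ (2 * 1) := by norm_num
      rw [this]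
      exact hxord 1 odd_one
    · rw [if_neg h]
      exact ⟨Subgroup.inv_mem _ (hxpowmem k0), by rw [orderOf_inv]; exact hxord k0 hk0odd⟩
  · -- the product identity
    rw [ofFn_ite (q + 2) 2 (by omega), ofFn_ite (s + 1) s (by omega)]
    have e1 : q + 2 - 2 = q := rfl
    have e2 : s + 1 - s = 1 := by omega
    rw [e1, e2, List.prod_append, List.prod_append, List.prod_replicate, List.prod_replicate,
      List.prod_replicate, List.prod_replicate, rely', one_mul, pow_one, ← pow_mul, ← pow_mul]
    exact pow_combo (qx (m + 4)) (2 ^ (m + 2) * q) (2 * s) (2 * k0) 2 (by rw [hk0]; ring)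
  · -- generation
    rw [eq_top_iff, ← PresentedGroup.closure_range_of (qaRels (m + 4))]
    refine (Subgroup.closure_le _).mpr ?_
    rintro z ⟨bb, rfl⟩
    apply Subgroup.subset_closure
    cases bb
    · -- of false = qy = a 0
      left; right
      exact ⟨⟨0, by omega⟩, by norm_num [qy]⟩
    · left; left
      rfl
end
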